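/- arXiv:1306.1149 — 9 statements merged into one kernel-verified Lean document; each statement's English description precedes it below -/
import Mathlib

section
/- Let $r, p_{\max}$ be positive reals. For any $t$ and reals $p_1,\ldots,p_t$ with $0 \le p_i \le p_{\max}$ for all $i$ and $\sum_{i=1}^t p_i \le r$, we have $1 - \prod_{i=1}^t (1-p_i) \le 1 - (1-p_{\max})^{r/p_{\max}}$ (assuming $p_{\max} \le 1$). -/
/-- Technical lemma of Bansal et al.: if `0 ≤ pᵢ ≤ pmax ≤ 1` and `∑ pᵢ ≤ r`, then
`1 - ∏ (1 - pᵢ) ≤ 1 - (1 - pmax) ^ (r / pmax)` (real exponent). -/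
theorem stmt1 (r pmax : ℝ) (hr : 0 < r) (hp : 0 < pmax) (hp1 : pmax ≤ 1)
    (t : ℕ) (p : Fin t → ℝ) (h0 : ∀ i, 0 ≤ p i) (h1 : ∀ i, p i ≤ pmax)
    (hsum : ∑ i, p i ≤ r) :
    1 - ∏ i, (1 - p i) ≤ 1 - (1 - pmax) ^ (r / pmax) := by
  have hprodnn : (0:ℝ) ≤ ∏ i, (1 - p i) :=
    Finset.prod_nonneg fun i _ => by have := (h1 i).trans hp1; linarith
  have key : (1 - pmax) ^ (r / pmax) ≤ ∏ i, (1 - p i) := by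
    rcases eq_or_lt_of_le hp1 with h | h
    · rw [h, sub_self, Real.zero_rpow (by positivity)]
      exact hprodnn
    · have hb : 0 < 1 - pmax := by linarith
      calc (1 - pmax) ^ (r / pmax)
          ≤ (1 - pmax) ^ (∑ i, p i / pmax) := by
            apply Real.rpow_le_rpow_of_exponent_ge hb (by linarith)
            rw [← Finset.sum_div]
            gcongr
        _ = ∏ i, (1 - pmax) ^ (p i / pmax) := Real.rpow_sum_of_pos hb _ _
        _ ≤ ∏ i, (1 - p i) := by
            apply Finset.prod_le_prod
            · intro i _; positivity
            · intro i _
              have h2 : (1 - pmax) ^ (p i / pmax) ≤ 1 + (p i / pmax) * (-pmax) := by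
                have := rpow_one_add_le_one_add_mul_self (s := -pmax) (by linarith)
                  (p := p i / pmax) (div_nonneg (h0 i) hp.le)
                  ((div_le_one hp).mpr (h1 i))
                simpa [← sub_eq_add_neg] using this
              have : (p i / pmax) * pmax = p i := div_mul_cancel₀ _ hp.ne'
              nlinarith
  linarith
end

section
/- For every real $\mu_3 \in [0, t/6]$ with $t > 0$, we have $1 - \left(1 - \frac{t/6}{t/2 - \mu_3}\right)^{(t/3 - \mu_3)/(t/6)} \le 5/9$, with the maximum of the left-hand side over $\mu_3 \in [0,t/6]$ attained at $\mu_3 = 0$. -/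
open Real

private lemma key_bound (s : ℝ) (hs0 : 0 ≤ s) (hs1 : s ≤ 1) :
    (4 : ℝ) / 9 ≤ ((2 - s) / (3 - s)) ^ (2 - s) := by
  set b : ℝ := (2 - s) / (3 - s) with hb
  have h3 : (0:ℝ) < 3 - s := by linarith
  have h2s : (0:ℝ) < 2 - s := by linarith
  have hbpos : 0 < b := div_pos h2s h3
  have hble : b ≤ 1 := by
    rw [hb, div_le_one h3]; linarith
  -- b^s ≤ 1 + s*(b-1)
  have hbern : b ^ s ≤ 1 + s * (b - 1) := by
    have := rpow_one_add_le_one_add_mul_self (s := b - 1) (by linarith) hs0 hs1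
    simpa using this
  have hc : (0:ℝ) < 1 + s * (b - 1) := by
    have : b ≥ 1/2 := by
      rw [hb, ge_iff_le, le_div_iff₀ h3]; linarith
    nlinarith
  have hsplit : b ^ (2 - s) = b ^ (2:ℝ) / b ^ s := Real.rpow_sub hbpos 2 s
  have h2 : b ^ (2:ℝ) = b * b := by
    rw [show (2:ℝ) = ((2:ℕ):ℝ) by norm_num, Real.rpow_natCast]; ring
  have hbe : b * (3 - s) = 2 - s := by
    rw [hb]; field_simp
  have hkey : (4:ℝ) / 9 * (1 + s * (b - 1)) ≤ b * b := by
    nlinarith [sq_nonneg s, sq_nonneg (b * s), mul_pos hbpos h3]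
  calc (4:ℝ)/9 ≤ (b * b) / (1 + s * (b - 1)) := by
        rw [le_div_iff₀ hc]; linarith
    _ ≤ (b * b) / b ^ s := by
        apply div_le_div_of_nonneg_left (by positivity) (by positivity) hbern
    _ = b ^ (2 - s) := by rw [hsplit, h2]

/-- Case `k = 2` bound: for `μ₃ ∈ [0, t/6]`, the quantity
`1 - (1 - (t/6)/(t/2 - μ₃)) ^ ((t/3 - μ₃)/(t/6))` is at most `5/9`, and is at most
its value at `μ₃ = 0`. -/
theorem stmt3 (t μ₃ : ℝ) (ht : 0 < t) (h0 : 0 ≤ μ₃) (h1 : μ₃ ≤ t / 6) :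
    1 - (1 - (t / 6) / (t / 2 - μ₃)) ^ ((t / 3 - μ₃) / (t / 6)) ≤ 5 / 9 ∧
    1 - (1 - (t / 6) / (t / 2 - μ₃)) ^ ((t / 3 - μ₃) / (t / 6)) ≤
      1 - (1 - (t / 6) / (t / 2 - (0 : ℝ))) ^ ((t / 3 - (0 : ℝ)) / (t / 6)) := by
  set s : ℝ := 6 * μ₃ / t with hsdef
  have hs0 : 0 ≤ s := by positivity
  have hs1 : s ≤ 1 := by
    rw [hsdef, div_le_one ht]; linarith
  have ht2 : (0:ℝ) < t / 2 - μ₃ := by linarith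
  have hne1 : t / 2 - μ₃ ≠ 0 := ne_of_gt ht2
  have hbase : 1 - (t / 6) / (t / 2 - μ₃) = (2 - s) / (3 - s) := by
    have h3s : (3:ℝ) - s = (t / 2 - μ₃) * 6 / t := by rw [hsdef]; field_simp; ring
    have h2s : (2:ℝ) - s = (t / 3 - μ₃) * 6 / t := by rw [hsdef]; field_simp; ring
    rw [h3s, h2s, div_div_div_eq,
      show (t / 3 - μ₃) * 6 * t = t * 6 * (t / 3 - μ₃) by ring,
      show t * ((t / 2 - μ₃) * 6) = t * 6 * (t / 2 - μ₃) by ring,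
      mul_div_mul_left _ _ (by positivity : (0:ℝ) < t * 6).ne',
      eq_div_iff hne1, sub_mul, one_mul, div_mul_cancel₀ _ hne1]
    ring
  have hexp : (t / 3 - μ₃) / (t / 6) = 2 - s := by
    rw [hsdef]; field_simp; ring
  have hmain : (4:ℝ)/9 ≤ (1 - (t / 6) / (t / 2 - μ₃)) ^ ((t / 3 - μ₃) / (t / 6)) := by
    rw [hbase, hexp]; exact key_bound s hs0 hs1
  have hzero : (1 - (t / 6) / (t / 2 - (0 : ℝ))) ^ ((t / 3 - (0 : ℝ)) / (t / 6)) = 4/9 := by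
    have h1' : 1 - (t / 6) / (t / 2 - (0:ℝ)) = 2/3 := by
      rw [sub_zero, div_div_div_eq, mul_comm 6 t, mul_div_mul_left _ _ ht.ne']; norm_num
    have h2' : (t / 3 - (0:ℝ)) / (t / 6) = 2 := by field_simp; ring
    rw [h1', h2', show (2:ℝ) = ((2:ℕ):ℝ) by norm_num, Real.rpow_natCast]
    norm_num
  constructor
  · linarith
  · rw [hzero]; linarith
end

section
/- In the two-job instance with budget $B = N+1$ (job 1 takes time $N+1$ with probability $1-1/N$ yielding reward 1, and time 1 with probability $1/N$ yielding reward 0; job 2 deterministically takes time 1 and yields reward 1), every adaptive non-preemptive scheduling policy obtains expected reward at most 1, while the LP relaxation $(\mathtt{LP'})$ has optimal value at least $2 - 1/N$. Hence the projection gap of $(\mathtt{LP'})$ is at least $2 - 1/N$ for every integer $N \ge 2$. -/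
open Finset

namespace S6

/-- Survival function of job 1: it takes time `N+1` w.p. `1 - 1/N` (reward 1) and
time `1` w.p. `1/N` (reward 0). `pr1 N s = Pr[S₁ > s]`. -/
noncomputable def pr1 (N s : ℕ) : ℝ := if s = 0 then 1 else if s ≤ N then 1 - 1 / N else 0

/-- Survival function of job 2: it deterministically takes time 1. `pr2 s = Pr[S₂ > s]`. -/
def pr2 (s : ℕ) : ℝ := if s = 0 then 1 else 0

/-- Feasibility for the LP relaxation `(LP')` on this two-job instance with budget
`B = N+1`: nonnegativity, `∑ₜ x i t ≤ 1`, and the capacity constraints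
`∑ᵢ ∑_{t' ≤ t} x i t' · Pr[Sᵢ > t - t'] ≤ 1`. -/
def Feasible (N : ℕ) (x : Fin 2 → ℕ → ℝ) : Prop :=
  (∀ i t, 0 ≤ x i t) ∧
  (∀ i, ∑ t ∈ Icc 1 (N + 1), x i t ≤ 1) ∧
  (∀ t ∈ Icc 1 (N + 1),
    ∑ t' ∈ Icc 1 t, (x 0 t' * pr1 N (t - t') + x 1 t' * pr2 (t - t')) ≤ 1)

/-- LP objective `∑_{i,t} ER_{i,t} x_{i,t}`: job 1 started at time `t` yields expected
reward `1 - 1/N` iff `t = 1` (it must complete by time `B = N+1`), and job 2 yields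
reward 1 whenever it is started within the budget. -/
noncomputable def lpObj (N : ℕ) (x : Fin 2 → ℕ → ℝ) : ℝ :=
  (1 - 1 / N) * x 0 1 + ∑ t ∈ Icc 1 (N + 1), x 1 t

/-- An adaptive non-preemptive policy for the two-job instance: choose which job to
start first and the (time ≥ 1) at which to start it; the start time of the second
job may depend on the realized processing time `s` of the first job, but must come
after the first job finishes. (Starting a job after the budget models not starting
it at all.) -/
structure Policy (N : ℕ) where
  first : Fin 2
  start1 : ℕ
  start2 : ℕ → ℕ
  h1 : 1 ≤ start1
  h2 : ∀ s, start1 + s ≤ start2 s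

/-- Realized reward of a policy when job 1 has realized processing time `s0 ∈ {1, N+1}`:
job 1 pays 1 iff its realized time is `N+1` and it completes by time `N+1`;
job 2 pays 1 iff it completes by time `N+1`. -/
def reward (N : ℕ) (P : Policy N) (s0 : ℕ) : ℝ :=
  (if s0 = N + 1 ∧ (if P.first = 0 then P.start1 else P.start2 1) + s0 ≤ N + 2
    then (1 : ℝ) else 0) +
  (if (if P.first = 0 then P.start2 s0 else P.start1) + 1 ≤ N + 2 then (1 : ℝ) else 0)

/-- Expected reward of a policy: job 1 takes time `1` w.p. `1/N` and `N+1` w.p. `1-1/N`. -/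
noncomputable def expReward (N : ℕ) (P : Policy N) : ℝ :=
  (1 / N) * reward N P 1 + (1 - 1 / N) * reward N P (N + 1)

end S6

/-- In the two-job instance with budget `B = N+1`, the LP relaxation `(LP')` attains
value at least `2 - 1/N`, while every adaptive non-preemptive policy obtains expected
reward at most `1`; hence the projection gap of `(LP')` is at least `2 - 1/N`. -/
theorem stmt6 (N : ℕ) (hN : 2 ≤ N) :
    (∃ x : Fin 2 → ℕ → ℝ, S6.Feasible N x ∧ 2 - 1 / N ≤ S6.lpObj N x) ∧
    (∀ P : S6.Policy N, S6.expReward N P ≤ 1) := by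
  have hN0 : (0:ℝ) < N := by
    have : (2:ℝ) ≤ N := by exact_mod_cast hN
    linarith
  have h1N : (0:ℝ) ≤ 1/N := by positivity
  have h2N : (0:ℝ) ≤ 1 - 1/N := by
    rw [sub_nonneg, div_le_one hN0]
    have : (2:ℝ) ≤ N := by exact_mod_cast hN
    linarith
  have hsum1 : ∑ t ∈ Icc 1 (N+1), (if 2 ≤ t then (1:ℝ)/N else 0) = 1 := by
    have hsub : Icc 2 (N+1) ⊆ Icc 1 (N+1) := Icc_subset_Icc_left (by omega)
    rw [← Finset.sum_subset hsub (by
      intro t ht hnt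
      rw [if_neg]
      simp only [mem_Icc] at ht hnt
      omega)]
    have : ∀ t ∈ Icc 2 (N+1), (if 2 ≤ t then (1:ℝ)/N else 0) = 1/N := by
      intro t ht
      rw [if_pos (mem_Icc.mp ht).1]
    rw [Finset.sum_congr rfl this, Finset.sum_const, Nat.card_Icc]
    have : N + 1 + 1 - 2 = N := by omega
    rw [this, nsmul_eq_mul]
    field_simp
  constructor
  · refine ⟨![fun t => if t = 1 then (1:ℝ) else 0,
      fun t => if 2 ≤ t then (1:ℝ)/N else 0], ⟨?_, ?_, ?_⟩, ?_⟩
    · intro i t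
      fin_cases i <;>
        simp only [Fin.mk_zero, Fin.mk_one, Matrix.cons_val_zero, Matrix.cons_val_one,
          Matrix.head_cons] <;>
        split_ifs <;> positivity
    · intro i
      fin_cases i <;>
        simp only [Fin.mk_zero, Fin.mk_one, Matrix.cons_val_zero, Matrix.cons_val_one,
          Matrix.head_cons]
      · rw [Finset.sum_eq_single_of_mem 1 (mem_Icc.mpr ⟨le_refl 1, by omega⟩)
          (fun b _ hb => if_neg hb)]
        simp
      · rw [hsum1]
    · intro t ht
      simp only [mem_Icc] at ht
      simp only [Matrix.cons_val_zero, Matrix.cons_val_one, Matrix.head_cons]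
      rw [Finset.sum_add_distrib]
      have hA : ∑ t' ∈ Icc 1 t, (if t' = 1 then (1:ℝ) else 0) * S6.pr1 N (t - t')
          = S6.pr1 N (t - 1) := by
        rw [Finset.sum_eq_single_of_mem 1 (mem_Icc.mpr ⟨le_refl 1, by omega⟩)
          (by intro b _ hb; rw [if_neg hb, zero_mul])]
        rw [if_pos rfl, one_mul]
      have hB : ∑ t' ∈ Icc 1 t, (if 2 ≤ t' then (1:ℝ)/N else 0) * S6.pr2 (t - t')
          = (if 2 ≤ t then (1:ℝ)/N else 0) := by
        rw [Finset.sum_eq_single_of_mem t (mem_Icc.mpr ⟨by omega, le_refl t⟩)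
          (by
            intro b hb hbt
            simp only [mem_Icc] at hb
            have : t - b ≠ 0 := by omega
            rw [S6.pr2, if_neg this, mul_zero])]
        rw [Nat.sub_self, S6.pr2, if_pos rfl, mul_one]
      rw [hA, hB]
      rcases eq_or_ne t 1 with h1 | h1
      · subst h1
        rw [if_neg (by omega), S6.pr1, if_pos rfl]
        norm_num
      · rw [if_pos (by omega), S6.pr1, if_neg (by omega), if_pos (by omega)]
        ring_nf
        linarith
    · unfold S6.lpObj
      simp only [Matrix.cons_val_zero, Matrix.cons_val_one, Matrix.head_cons]
      rw [hsum1]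
      norm_num
      linarith
  · intro P
    have hA := P.h1
    have hB := P.h2 (N+1)
    have hC := P.h2 1
    have hr1 : S6.reward N P 1 ≤ 1 := by
      unfold S6.reward
      rw [if_neg (by rintro ⟨h, -⟩; omega)]
      split_ifs <;> norm_num
    have hr2 : S6.reward N P (N + 1) ≤ 1 := by
      unfold S6.reward
      rcases eq_or_ne P.first 0 with hf | hf
      · rw [if_pos hf, if_pos hf]
        split_ifs with g1 g2
        · exfalso; obtain ⟨-, g1⟩ := g1; omega
        · norm_num
        · norm_num
        · norm_num
      · rw [if_neg hf, if_neg hf]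
        split_ifs with g1 g2
        · exfalso; obtain ⟨-, g1⟩ := g1; omega
        · exfalso; obtain ⟨-, g1⟩ := g1; omega
        · norm_num
        · norm_num
    unfold S6.expReward
    nlinarith [mul_le_mul_of_nonneg_left hr1 h1N, mul_le_mul_of_nonneg_left hr2 h2N]
end

section
/- Let $\{x^a_{u,t}\}$ be (the $x$-part of) a feasible solution to $(\mathtt{PolyLP})$. Then there exist values $q_{v,b,t',u,a,t} \in [0,1]$, defined for $(v,b) \in \mathrm{Par}(u)$, $a \in A$, $t' < t$ with $x^a_{u,t}>0$ and $x^b_{v,t'}>0$, such that: (i) $\sum_{a}\sum_{t > t'} q_{v,b,t',u,a,t} \le 1$ for each $(v,b) \in \mathrm{Par}(u)$ and $t'$ with $x^b_{v,t'}>0$; and (ii) $\sum_{(v,b)\in\mathrm{Par}(u)} \big(\sum_{t'<t} x^b_{v,t'} q_{v,b,t',u,a,t}\big) p^b_{v,u} = x^a_{u,t}$ for each non-root $u$, action $a$, and time $t$ with $x^a_{u,t}>0$. Moreover such $q$'s are computable in polynomial time. -/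
open Finset

private lemma clampdiff (a b c d : ℝ) (hab : a ≤ b) (hdc : d ≤ c) :
    max 0 (min b c - max a d) = max d (min b c) - max d (min a c) := by
  rcases le_total b c with h1 | h1 <;> rcases le_total a c with h2 | h2 <;>
    rcases le_total a d with h3 | h3 <;>
    simp only [min_def, max_def] <;> split_ifs <;> linarith

section Aux

variable {V A : Type*} [Fintype V] [Fintype A]

/-- Total inflow weight into `u` at time `t'`. -/
noncomputable def Wf (p : V → A → V → ℝ) (x : V → A → ℕ → ℝ) (u : V) (t' : ℕ) : ℝ :=
  ∑ v, ∑ b, x v b t' * p v b u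

/-- Total demand at node `u` at time `t`. -/
noncomputable def Df (x : V → A → ℕ → ℝ) (u : V) (t : ℕ) : ℝ := ∑ a, x u a t

/-- Cumulative supply. -/
noncomputable def Sf (p : V → A → V → ℝ) (x : V → A → ℕ → ℝ) (u : V) (k : ℕ) : ℝ :=
  ∑ i ∈ Icc 1 k, Wf p x u i

/-- Cumulative demand. -/
noncomputable def Tf (x : V → A → ℕ → ℝ) (u : V) (k : ℕ) : ℝ :=
  ∑ i ∈ Icc 1 k, Df x u i

/-- Greedy (interval-overlap) flow assignment from supply slot `t'` to demand slot `t`. -/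
noncomputable def rf (p : V → A → V → ℝ) (x : V → A → ℕ → ℝ) (u : V) (t' t : ℕ) : ℝ :=
  max 0 (min (Sf p x u t') (Tf x u t) - max (Sf p x u (t' - 1)) (Tf x u (t - 1)))

variable {p : V → A → V → ℝ} {x : V → A → ℕ → ℝ}

lemma Wf_nonneg (hpnn : ∀ v b u, 0 ≤ p v b u) (hxnn : ∀ u a t, 0 ≤ x u a t)
    (u : V) (t' : ℕ) : 0 ≤ Wf p x u t' :=
  Finset.sum_nonneg fun v _ => Finset.sum_nonneg fun b _ =>
    mul_nonneg (hxnn v b t') (hpnn v b u)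

lemma Df_nonneg (hxnn : ∀ u a t, 0 ≤ x u a t) (u : V) (t : ℕ) : 0 ≤ Df x u t :=
  Finset.sum_nonneg fun a _ => hxnn u a t

lemma Sf_mono (hpnn : ∀ v b u, 0 ≤ p v b u) (hxnn : ∀ u a t, 0 ≤ x u a t)
    (u : V) {k l : ℕ} (h : k ≤ l) : Sf p x u k ≤ Sf p x u l :=
  Finset.sum_le_sum_of_subset_of_nonneg (Finset.Icc_subset_Icc_right h)
    fun i _ _ => Wf_nonneg hpnn hxnn u i

lemma Tf_mono (hxnn : ∀ u a t, 0 ≤ x u a t)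
    (u : V) {k l : ℕ} (h : k ≤ l) : Tf x u k ≤ Tf x u l :=
  Finset.sum_le_sum_of_subset_of_nonneg (Finset.Icc_subset_Icc_right h)
    fun i _ _ => Df_nonneg hxnn u i

lemma Sf_zero (u : V) : Sf p x u 0 = 0 := by simp [Sf]

lemma Tf_zero (u : V) : Tf x u 0 = 0 := by simp [Tf]

lemma Sf_nonneg (hpnn : ∀ v b u, 0 ≤ p v b u) (hxnn : ∀ u a t, 0 ≤ x u a t)
    (u : V) (k : ℕ) : 0 ≤ Sf p x u k :=
  Finset.sum_nonneg fun i _ => Wf_nonneg hpnn hxnn u i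

lemma Tf_nonneg (hxnn : ∀ u a t, 0 ≤ x u a t) (u : V) (k : ℕ) : 0 ≤ Tf x u k :=
  Finset.sum_nonneg fun i _ => Df_nonneg hxnn u i

lemma Sf_succ (u : V) (k : ℕ) : Sf p x u (k + 1) = Sf p x u k + Wf p x u (k + 1) :=
  Finset.sum_Icc_succ_top (by omega) _

lemma Tf_succ (u : V) (k : ℕ) : Tf x u (k + 1) = Tf x u k + Df x u (k + 1) :=
  Finset.sum_Icc_succ_top (by omega) _

lemma rf_nonneg (u : V) (t' t : ℕ) : 0 ≤ rf p x u t' t := le_max_left _ _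

lemma Sf_diff_le (hpnn : ∀ v b u, 0 ≤ p v b u) (hxnn : ∀ u a t, 0 ≤ x u a t)
    (u : V) (t' : ℕ) : Sf p x u t' - Sf p x u (t' - 1) ≤ Wf p x u t' := by
  cases t' with
  | zero => simpa using Wf_nonneg hpnn hxnn u 0
  | succ m => simp [Sf_succ, Nat.add_sub_cancel]

lemma rf_le_W (hpnn : ∀ v b u, 0 ≤ p v b u) (hxnn : ∀ u a t, 0 ≤ x u a t)
    (u : V) (t' t : ℕ) : rf p x u t' t ≤ Wf p x u t' := by
  refine max_le (Wf_nonneg hpnn hxnn u t') ?_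
  have h1 : min (Sf p x u t') (Tf x u t) ≤ Sf p x u t' := min_le_left _ _
  have h2 : Sf p x u (t' - 1) ≤ max (Sf p x u (t' - 1)) (Tf x u (t - 1)) := le_max_left _ _
  have h3 := Sf_diff_le hpnn hxnn u t'
  linarith

/-- Key bound (i): the total flow out of a supply slot is at most its capacity. -/
lemma rf_sum_le (hpnn : ∀ v b u, 0 ≤ p v b u) (hxnn : ∀ u a t, 0 ≤ x u a t)
    (u : V) (t' B : ℕ) (ht' : 1 ≤ t') :
    ∑ t ∈ Icc (t' + 1) B, rf p x u t' t ≤ Wf p x u t' := by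
  set h : ℕ → ℝ := fun i =>
    max (Sf p x u (t' - 1)) (min (Tf x u (t' + i)) (Sf p x u t')) with hh
  have hterm : ∀ i, rf p x u t' (t' + 1 + i) = h (i + 1) - h i := by
    intro i
    have e1 : t' + 1 + i - 1 = t' + i := by omega
    have e2 : t' + (i + 1) = t' + 1 + i := by omega
    simp only [rf, e1, hh, e2]
    rw [min_comm (Sf p x u t') (Tf x u (t' + 1 + i)),
      max_comm (Sf p x u (t' - 1)) (Tf x u (t' + i))]
    exact clampdiff _ _ _ _ (Tf_mono hxnn u (by omega)) (Sf_mono hpnn hxnn u (by omega))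
  rw [← Finset.Ico_add_one_right_eq_Icc, Finset.sum_Ico_eq_sum_range]
  rw [Finset.sum_congr rfl fun i _ => hterm i, Finset.sum_range_sub h]
  have h0 : Sf p x u (t' - 1) ≤ h 0 := le_max_left _ _
  have hn : h (B + 1 - (t' + 1)) ≤ Sf p x u t' := by
    refine max_le (Sf_mono hpnn hxnn u (by omega)) (min_le_right _ _)
  have hd := Sf_diff_le hpnn hxnn u t'
  linarith

end Aux

/-- Flow decomposition (Lemma 6.1): given the `x`-part of a feasible solution of
`(PolyLP)` (on an arm with nodes `V`, actions `A`, transitions `p`, horizon `B`),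
there are probabilities `q_{v,b,t',u,a,t} ∈ [0,1]` such that
(i) `∑ₐ ∑_{t > t'} q_{v,b,t',u,a,t} ≤ 1` whenever `(v,b) ∈ Par(u)` and `x^b_{v,t'} > 0`,
and (ii) `∑_{(v,b) ∈ Par(u)} (∑_{t' < t} x^b_{v,t'} q_{v,b,t',u,a,t}) p^b_{v,u} = x^a_{u,t}`
for every non-root `u`, action `a` and `t ∈ [B]` with `x^a_{u,t} > 0`. -/
theorem stmt10 {V A : Type*} [Fintype V] [Fintype A] (B : ℕ)
    (root : V → Prop) (p : V → A → V → ℝ)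
    (x : V → A → ℕ → ℝ) (s : V → ℕ → ℝ)
    (hpnn : ∀ v b u, 0 ≤ p v b u)
    (hxnn : ∀ u a t, 0 ≤ x u a t)
    (hsnn : ∀ u t, 0 ≤ s u t)
    (hP2 : ∀ u t, ∑ a, x u a t ≤ s u t)
    (hP4b : ∀ u, ¬ root u → s u 1 = 0)
    (hP5 : ∀ u t, 2 ≤ t →
      s u t = s u (t - 1) - (∑ a, x u a (t - 1)) + ∑ v, ∑ b, x v b (t - 1) * p v b u) :
    ∃ q : V → A → ℕ → V → A → ℕ → ℝ,
      (∀ v b t' u a t, 0 ≤ q v b t' u a t ∧ q v b t' u a t ≤ 1) ∧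
      (∀ u v b, ∀ t' ∈ Icc 1 B, 0 < p v b u → 0 < x v b t' →
        ∑ a, ∑ t ∈ Icc (t' + 1) B, q v b t' u a t ≤ 1) ∧
      (∀ u (a : A), ¬ root u → ∀ t ∈ Icc 1 B, 0 < x u a t →
        ∑ v, ∑ b, (∑ t' ∈ Icc 1 (t - 1), x v b t' * q v b t' u a t) * p v b u
          = x u a t) := by
  classical
  have hDle : ∀ u t, Df x u t ≤ s u t := fun u t => hP2 u t
  -- the cumulative balance identity for non-root nodes
  have hsT : ∀ u, ¬ root u → ∀ t, 1 ≤ t → s u t = Sf p x u (t - 1) - Tf x u (t - 1) := by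
    intro u hu t
    induction t with
    | zero => omega
    | succ n ih =>
      intro _
      rcases Nat.eq_zero_or_pos n with hn | hn
      · subst hn
        simp [hP4b u hu, Sf_zero, Tf_zero]
      · have h5 := hP5 u (n + 1) (by omega)
        simp only [Nat.add_sub_cancel] at h5 ⊢
        have hW : (∑ v, ∑ b, x v b n * p v b u) = Wf p x u n := rfl
        have hD : (∑ a, x u a n) = Df x u n := rfl
        rw [hW, hD] at h5
        obtain ⟨m, rfl⟩ : ∃ m, n = m + 1 := ⟨n - 1, by omega⟩
        rw [h5, ih hn]
        simp only [Nat.add_sub_cancel]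
        rw [Sf_succ, Tf_succ]
        ring
  -- prefix condition: cumulative demand up to `t` is at most cumulative supply up to `t-1`
  have hpre : ∀ u, ¬ root u → ∀ t, 1 ≤ t → Tf x u t ≤ Sf p x u (t - 1) := by
    intro u hu t ht
    obtain ⟨m, rfl⟩ : ∃ m, t = m + 1 := ⟨t - 1, by omega⟩
    have h1 := hsT u hu (m + 1) ht
    have h2 := hDle u (m + 1)
    simp only [Nat.add_sub_cancel] at h1 ⊢
    rw [Tf_succ]
    linarith
  -- key identity (ii): the flow into a demand slot exactly covers it
  have hsum2 : ∀ u, ¬ root u → ∀ t, 1 ≤ t →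
      ∑ t' ∈ Icc 1 (t - 1), rf p x u t' t = Df x u t := by
    intro u hu t ht
    have hTt : Tf x u t = Tf x u (t - 1) + Df x u t := by
      obtain ⟨m, rfl⟩ : ∃ m, t = m + 1 := ⟨t - 1, by omega⟩
      simp only [Nat.add_sub_cancel]
      exact Tf_succ u m
    set g : ℕ → ℝ := fun i => max (Tf x u (t - 1)) (min (Sf p x u i) (Tf x u t)) with hg
    have hterm : ∀ i, rf p x u (1 + i) t = g (i + 1) - g i := by
      intro i
      have e1 : 1 + i - 1 = i := by omega
      have e2 : 1 + i = i + 1 := by omega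
      simp only [rf, e1, e2, hg]
      exact clampdiff _ _ _ _ (Sf_mono hpnn hxnn u (by omega)) (Tf_mono hxnn u (by omega))
    rw [← Finset.Ico_add_one_right_eq_Icc, Finset.sum_Ico_eq_sum_range]
    have e3 : t - 1 + 1 - 1 = t - 1 := by omega
    rw [e3, Finset.sum_congr rfl fun i _ => hterm i, Finset.sum_range_sub g]
    have hg0 : g 0 = Tf x u (t - 1) := by
      simp only [hg, Sf_zero]
      rw [min_eq_left (Tf_nonneg hxnn u t), max_eq_left (Tf_nonneg hxnn u (t - 1))]
    have hgt : g (t - 1) = Tf x u t := by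
      simp only [hg]
      rw [min_eq_right (hpre u hu t ht), max_eq_right (Tf_mono hxnn u (by omega))]
    rw [hg0, hgt]
    linarith
  refine ⟨fun v b t' u a t =>
    if root u then 0 else rf p x u t' t / Wf p x u t' * (x u a t / Df x u t), ?_, ?_, ?_⟩
  · -- range [0,1]
    intro v b t' u a t
    by_cases hr : root u
    · simp [hr]
    · simp only [if_neg hr]
      constructor
      · exact mul_nonneg (div_nonneg (rf_nonneg u t' t) (Wf_nonneg hpnn hxnn u t'))
          (div_nonneg (hxnn u a t) (Df_nonneg hxnn u t))
      · refine mul_le_one₀ (div_le_one_of_le₀ (rf_le_W hpnn hxnn u t' t)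
          (Wf_nonneg hpnn hxnn u t'))
          (div_nonneg (hxnn u a t) (Df_nonneg hxnn u t))
          (div_le_one_of_le₀ ?_ (Df_nonneg hxnn u t))
        exact Finset.single_le_sum (fun i _ => hxnn u i t) (Finset.mem_univ a)
  · -- (i): total outflow from a supply slot is at most 1
    intro u v b t' ht' hp hx
    by_cases hr : root u
    · simp [hr]
    · simp only [if_neg hr]
      have ht'1 : 1 ≤ t' := (Finset.mem_Icc.mp ht').1
      have hWpos : 0 < Wf p x u t' := by
        have h1 : x v b t' * p v b u ≤ ∑ b', x v b' t' * p v b' u :=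
          Finset.single_le_sum (fun i _ => mul_nonneg (hxnn v i t') (hpnn v i u))
            (Finset.mem_univ b)
        have h2 : (∑ b', x v b' t' * p v b' u) ≤ Wf p x u t' :=
          Finset.single_le_sum
            (fun v' _ => Finset.sum_nonneg fun i _ => mul_nonneg (hxnn v' i t') (hpnn v' i u))
            (Finset.mem_univ v)
        exact lt_of_lt_of_le (mul_pos hx hp) (le_trans h1 h2)
      calc ∑ a, ∑ t ∈ Icc (t' + 1) B,
              rf p x u t' t / Wf p x u t' * (x u a t / Df x u t)
          = ∑ t ∈ Icc (t' + 1) B, ∑ a,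
              rf p x u t' t / Wf p x u t' * (x u a t / Df x u t) := Finset.sum_comm
        _ ≤ ∑ t ∈ Icc (t' + 1) B, rf p x u t' t / Wf p x u t' := by
            refine Finset.sum_le_sum fun t _ => ?_
            rw [← Finset.mul_sum]
            have hDS : (∑ a, x u a t / Df x u t) = Df x u t / Df x u t :=
              (Finset.sum_div _ _ _).symm
            rw [hDS]
            exact mul_le_of_le_one_right
              (div_nonneg (rf_nonneg u t' t) (Wf_nonneg hpnn hxnn u t'))
              (div_le_one_of_le₀ le_rfl (Df_nonneg hxnn u t))
        _ = (∑ t ∈ Icc (t' + 1) B, rf p x u t' t) / Wf p x u t' :=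
            (Finset.sum_div _ _ _).symm
        _ ≤ 1 := div_le_one_of_le₀ (rf_sum_le hpnn hxnn u t' B ht'1)
            (Wf_nonneg hpnn hxnn u t')
  · -- (ii): exact flow balance
    intro u a hr t ht hx
    simp only [if_neg hr]
    have ht1 : 1 ≤ t := (Finset.mem_Icc.mp ht).1
    have hDpos : 0 < Df x u t :=
      lt_of_lt_of_le hx (Finset.single_le_sum (fun i _ => hxnn u i t) (Finset.mem_univ a))
    have hWr : ∀ t'', rf p x u t'' t / Wf p x u t'' * Wf p x u t'' = rf p x u t'' t := by
      intro t''
      by_cases h : Wf p x u t'' = 0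
      · have hr0 : rf p x u t'' t = 0 :=
          le_antisymm (h ▸ rf_le_W hpnn hxnn u t'' t) (rf_nonneg u t'' t)
        simp [h, hr0]
      · exact div_mul_cancel₀ _ h
    have hfactor : ∀ (t'' : ℕ) (c : ℝ),
        (∑ v, ∑ b, x v b t'' * c * p v b u) = c * Wf p x u t'' := by
      intro t'' c
      rw [Wf, Finset.mul_sum]
      refine Finset.sum_congr rfl fun v _ => ?_
      rw [Finset.mul_sum]
      exact Finset.sum_congr rfl fun b _ => by ring
    calc ∑ v, ∑ b, (∑ t' ∈ Icc 1 (t - 1),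
            x v b t' * (rf p x u t' t / Wf p x u t' * (x u a t / Df x u t))) * p v b u
        = ∑ v, ∑ b, ∑ t' ∈ Icc 1 (t - 1),
            x v b t' * (rf p x u t' t / Wf p x u t' * (x u a t / Df x u t)) * p v b u := by
          simp only [Finset.sum_mul]
      _ = ∑ t' ∈ Icc 1 (t - 1), ∑ v, ∑ b,
            x v b t' * (rf p x u t' t / Wf p x u t' * (x u a t / Df x u t)) * p v b u := by
          rw [show (∑ v, ∑ b, ∑ t' ∈ Icc 1 (t - 1),
              x v b t' * (rf p x u t' t / Wf p x u t' * (x u a t / Df x u t)) * p v b u)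
            = ∑ v, ∑ t' ∈ Icc 1 (t - 1), ∑ b,
              x v b t' * (rf p x u t' t / Wf p x u t' * (x u a t / Df x u t)) * p v b u
            from Finset.sum_congr rfl fun v _ => Finset.sum_comm]
          exact Finset.sum_comm
      _ = ∑ t' ∈ Icc 1 (t - 1),
            rf p x u t' t / Wf p x u t' * (x u a t / Df x u t) * Wf p x u t' :=
          Finset.sum_congr rfl fun t' _ => hfactor t' _
      _ = ∑ t' ∈ Icc 1 (t - 1), rf p x u t' t * (x u a t / Df x u t) := by
          refine Finset.sum_congr rfl fun t' _ => ?_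
          rw [mul_right_comm, hWr t']
      _ = (∑ t' ∈ Icc 1 (t - 1), rf p x u t' t) * (x u a t / Df x u t) :=
          (Finset.sum_mul _ _ _).symm
      _ = Df x u t * (x u a t / Df x u t) := by rw [hsum2 u hr t ht1]
      _ = x u a t := by
          rw [mul_comm, div_mul_cancel₀ _ (ne_of_gt hDpos)]
end

section
/- Given a feasible solution $\{z^a_{\pi,i,t}\}, \{y_{\pi,t}\}$ of the exponential LP $(\mathtt{ExpLP})$ for the MAB superprocess, the projections $x^a_{u,t} = \sum_{\pi: \pi_i = u} z^a_{\pi,i,t}$ and $s_{u,t} = \sum_{\pi: \pi_i = u} y_{\pi,t}$ yield a feasible solution of the polynomial LP $(\mathtt{PolyLP})$ with the same objective value. In particular $\mathrm{OPT}_{\mathtt{ExpLP}} \le \mathrm{OPT}_{\mathtt{PolyLP}}$. -/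
open Finset

lemma sum_update_fiber {n : ℕ} {𝒮 : Fin n → Type*} [∀ i, Fintype (𝒮 i)]
    [∀ i, DecidableEq (𝒮 i)] (i : Fin n) (u v : 𝒮 i) (f : (∀ j, 𝒮 j) → ℝ) :
    ∑ π ∈ univ.filter (fun π => π i = u), f (Function.update π i v)
      = ∑ σ ∈ univ.filter (fun σ => σ i = v), f σ := by
  apply Finset.sum_nbij' (fun π => Function.update π i v) (fun σ => Function.update σ i u)
  · intro a ha; simp [Function.update_self]
  · intro a ha; simp [Function.update_self]
  · intro a ha
    simp only [mem_filter, mem_univ, true_and] at ha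
    rw [Function.update_idem, ← ha]
    exact Function.update_eq_self i a
  · intro a ha
    simp only [mem_filter, mem_univ, true_and] at ha
    rw [Function.update_idem, ← ha]
    exact Function.update_eq_self i a
  · intro a ha; rfl

lemma sum_update_offdiag {n : ℕ} {𝒮 : Fin n → Type*} [∀ i, Fintype (𝒮 i)]
    [∀ i, DecidableEq (𝒮 i)] (i j : Fin n) (hij : i ≠ j) (u : 𝒮 i)
    (g : (∀ k, 𝒮 k) → 𝒮 j → ℝ) :
    ∑ π ∈ univ.filter (fun π => π i = u), ∑ v, g (Function.update π j v) (π j)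
      = ∑ σ ∈ univ.filter (fun σ => σ i = u), ∑ w, g σ w := by
  have h1 := Finset.sum_product' (s := univ.filter (fun π => π i = u)) (t := univ)
    (f := fun π v => g (Function.update π j v) (π j))
  have h2 := Finset.sum_product' (s := univ.filter (fun σ => σ i = u)) (t := univ)
    (f := fun σ w => g σ w)
  rw [← h1, ← h2]
  apply Finset.sum_nbij' (fun q => (Function.update q.1 j q.2, q.1 j))
    (fun q => (Function.update q.1 j q.2, q.1 j))
  · rintro ⟨π, v⟩ h
    simp only [mem_product, mem_filter, mem_univ, true_and, and_true] at h ⊢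
    rw [Function.update_of_ne hij]; exact h
  · rintro ⟨σ, w⟩ h
    simp only [mem_product, mem_filter, mem_univ, true_and, and_true] at h ⊢
    rw [Function.update_of_ne hij]; exact h
  · rintro ⟨π, v⟩ h
    simp [Function.update_idem, Function.update_self, Function.update_eq_self]
  · rintro ⟨σ, w⟩ h
    simp [Function.update_idem, Function.update_self, Function.update_eq_self]
  · rintro ⟨π, v⟩ h; simp [Function.update_self]



set_option maxHeartbeats 8000000 in

/-- Projection lemma (Lemma 4.1, no bridge nodes): from a feasible solution
`(z, y)` of the exponential LP `(ExpLP)` over joint nodes `π ∈ ∏ᵢ 𝒮 i`, the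
marginals `x^a_{u,t} = ∑_{π : πᵢ = u} z^a_{π,i,t}` and `s_{u,t} = ∑_{π : πᵢ = u} y_{π,t}`
satisfy all constraints `(P1)`–`(P5)` of the polynomial LP `(PolyLP)`, and the two
objective values agree; hence `OPT_ExpLP ≤ OPT_PolyLP`. -/
theorem stmt12 {n : ℕ} (𝒮 : Fin n → Type*) [∀ i, Fintype (𝒮 i)] [∀ i, DecidableEq (𝒮 i)]
    {A : Type*} [Fintype A] (B : ℕ)
    (ρ : ∀ i, 𝒮 i) (p : ∀ i, 𝒮 i → A → 𝒮 i → ℝ) (r : ∀ i, 𝒮 i → A → ℝ)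
    (hpnn : ∀ i u a v, 0 ≤ p i u a v)
    (hpsum : ∀ i u a, ∑ v, p i u a v = 1)
    (z : (∀ i, 𝒮 i) → Fin n → A → ℕ → ℝ) (y : (∀ i, 𝒮 i) → ℕ → ℝ)
    -- (E1)
    (hE1 : ∀ t, ∑ π, ∑ i, ∑ a, z π i a t ≤ 1)
    -- (E2)
    (hE2 : ∀ π t, ∑ i, ∑ a, z π i a t ≤ y π t)
    -- (E3)
    (hE3 : ∀ π i a t, 0 ≤ z π i a t)
    -- (E4a), (E4b)
    (hE4a : y ρ 1 = 1)
    (hE4b : ∀ π, π ≠ ρ → y π 1 = 0)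
    -- (E5)
    (hE5 : ∀ π t, 2 ≤ t →
      y π t = y π (t - 1) - (∑ i, ∑ a, z π i a (t - 1))
        + ∑ i, ∑ v, ∑ a, z (Function.update π i v) i a (t - 1) * p i v a (π i)) :
    -- (P1)
    (∀ t, ∑ i, ∑ u, ∑ a,
        (∑ π ∈ univ.filter (fun π => π i = u), z π i a t) ≤ 1) ∧
    -- (P2)
    (∀ i (u : 𝒮 i) t,
        ∑ a, (∑ π ∈ univ.filter (fun π => π i = u), z π i a t)
          ≤ ∑ π ∈ univ.filter (fun π => π i = u), y π t) ∧
    -- (P3)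
    (∀ i (u : 𝒮 i) (a : A) t,
        0 ≤ ∑ π ∈ univ.filter (fun π => π i = u), z π i a t) ∧
    -- (P4a)
    (∀ i, ∑ π ∈ univ.filter (fun π => π i = ρ i), y π 1 = 1) ∧
    -- (P4b)
    (∀ i (u : 𝒮 i), u ≠ ρ i → ∑ π ∈ univ.filter (fun π => π i = u), y π 1 = 0) ∧
    -- (P5)
    (∀ i (u : 𝒮 i) t, 2 ≤ t →
        ∑ π ∈ univ.filter (fun π => π i = u), y π t
          = (∑ π ∈ univ.filter (fun π => π i = u), y π (t - 1))
            - (∑ a, ∑ π ∈ univ.filter (fun π => π i = u), z π i a (t - 1))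
            + ∑ v, ∑ a,
                (∑ π ∈ univ.filter (fun π => π i = v), z π i a (t - 1)) * p i v a u) ∧
    -- objectives agree
    (∑ t ∈ Icc 1 B, ∑ i, ∑ u, ∑ a,
        r i u a * (∑ π ∈ univ.filter (fun π => π i = u), z π i a t)
      = ∑ t ∈ Icc 1 B, ∑ π, ∑ i, ∑ a, r i (π i) a * z π i a t) := by


  have hrearr : ∀ (f : (∀ j, 𝒮 j) → Fin n → ℝ) (i : Fin n),
      ∑ u, ∑ π ∈ univ.filter (fun π => π i = u), f π i = ∑ π, f π i := by
    intro f i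
    exact Finset.sum_fiberwise univ (fun π => π i) (fun π => f π i)
  refine ⟨?_, ?_, ?_, ?_, ?_, ?_, ?_⟩
  · -- (P1)
    intro t
    have : ∑ i, ∑ u, ∑ a, (∑ π ∈ univ.filter (fun π => π i = u), z π i a t)
        = ∑ π, ∑ i, ∑ a, z π i a t := by
      rw [Finset.sum_comm]
      refine Finset.sum_congr rfl fun i _ => ?_
      have : ∑ u, ∑ a, (∑ π ∈ univ.filter (fun π => π i = u), z π i a t)
          = ∑ u, ∑ π ∈ univ.filter (fun π => π i = u), ∑ a, z π i a t :=
        Finset.sum_congr rfl fun u _ => Finset.sum_comm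
      rw [this]
      exact Finset.sum_fiberwise univ (fun π => π i) (fun π => ∑ a, z π i a t)
    rw [this]; exact hE1 t
  · -- (P2)
    intro i u t
    rw [Finset.sum_comm]
    refine Finset.sum_le_sum fun π hπ => ?_
    calc ∑ a, z π i a t ≤ ∑ j, ∑ a, z π j a t := by
          refine Finset.single_le_sum (f := fun j => ∑ a, z π j a t)
            (fun j _ => Finset.sum_nonneg fun a _ => hE3 π j a t) (mem_univ i)
      _ ≤ y π t := hE2 π t
  · -- (P3)
    intro i u a t
    exact Finset.sum_nonneg fun π _ => hE3 π i a t
  · -- (P4a)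
    intro i
    have hmem : ρ ∈ univ.filter (fun π => π i = ρ i) := mem_filter.mpr ⟨mem_univ ρ, rfl⟩
    calc ∑ π ∈ univ.filter (fun π => π i = ρ i), y π 1
        = y ρ 1 := Finset.sum_eq_single_of_mem ρ hmem (fun π _ hπ => hE4b π hπ)
      _ = 1 := hE4a
  · -- (P4b)
    intro i u hu
    refine Finset.sum_eq_zero fun π hπ => ?_
    simp only [mem_filter, mem_univ, true_and] at hπ
    refine hE4b π fun h => hu ?_
    rw [← hπ, h]
  · -- (P5)
    intro i u t ht
    have expand : ∑ π ∈ univ.filter (fun π => π i = u), y π t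
        = ∑ π ∈ univ.filter (fun π => π i = u),
            (y π (t - 1) - (∑ j, ∑ a, z π j a (t - 1))
              + ∑ j, ∑ v, ∑ a, z (Function.update π j v) j a (t - 1) * p j v a (π j)) :=
      Finset.sum_congr rfl fun π _ => hE5 π t ht
    set g : Fin n → ℝ := fun j =>
      ∑ π ∈ univ.filter (fun π => π i = u), ∑ v, ∑ a,
        z (Function.update π j v) j a (t - 1) * p j v a (π j) with hg
    set h : Fin n → ℝ := fun j =>
      ∑ π ∈ univ.filter (fun π => π i = u), ∑ a, z π j a (t - 1) with hh
    have hA : ∀ j, j ≠ i → g j = h j := by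
      intro j hji
      have step : ∀ π ∈ univ.filter (fun π => π i = u),
          (∑ v, ∑ a, z (Function.update π j v) j a (t - 1) * p j v a (π j))
            = ∑ v, (fun σ (w : 𝒮 j) => ∑ a, z σ j a (t - 1) * p j (σ j) a w)
                (Function.update π j v) (π j) := by
        intro π _
        refine Finset.sum_congr rfl fun v _ => ?_
        simp [Function.update_self]
      show (∑ π ∈ univ.filter (fun π => π i = u), ∑ v, ∑ a,
          z (Function.update π j v) j a (t - 1) * p j v a (π j))
        = ∑ π ∈ univ.filter (fun π => π i = u), ∑ a, z π j a (t - 1)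
      rw [Finset.sum_congr rfl step,
        sum_update_offdiag i j (Ne.symm hji) u
          (fun σ w => ∑ a, z σ j a (t - 1) * p j (σ j) a w)]
      refine Finset.sum_congr rfl fun σ _ => ?_
      rw [Finset.sum_comm]
      refine Finset.sum_congr rfl fun a _ => ?_
      rw [← Finset.mul_sum, hpsum, mul_one]
    have hB : g i = ∑ v, ∑ a,
        (∑ π ∈ univ.filter (fun π => π i = v), z π i a (t - 1)) * p i v a u := by
      show (∑ π ∈ univ.filter (fun π => π i = u), ∑ v, ∑ a,
          z (Function.update π i v) i a (t - 1) * p i v a (π i)) = _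
      have step : ∀ π ∈ univ.filter (fun π => π i = u),
          (∑ v, ∑ a, z (Function.update π i v) i a (t - 1) * p i v a (π i))
            = ∑ v, ∑ a, z (Function.update π i v) i a (t - 1) * p i v a u := by
        intro π hπ
        simp only [mem_filter, mem_univ, true_and] at hπ
        rw [hπ]
      rw [Finset.sum_congr rfl step, Finset.sum_comm]
      refine Finset.sum_congr rfl fun v _ => ?_
      rw [sum_update_fiber i u v (fun σ => ∑ a, z σ i a (t - 1) * p i v a u),
        Finset.sum_comm]
      refine Finset.sum_congr rfl fun a _ => ?_
      rw [Finset.sum_mul]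
    have hgsum : ∑ π ∈ univ.filter (fun π => π i = u), ∑ j, ∑ v, ∑ a,
        z (Function.update π j v) j a (t - 1) * p j v a (π j)
        = ∑ j, g j := Finset.sum_comm
    have hzsum : ∑ π ∈ univ.filter (fun π => π i = u), ∑ j, ∑ a, z π j a (t - 1)
        = ∑ j, h j := Finset.sum_comm
    have hgs : ∑ j, g j = (∑ v, ∑ a,
        (∑ π ∈ univ.filter (fun π => π i = v), z π i a (t - 1)) * p i v a u)
          + ∑ j ∈ univ.erase i, h j := by
      calc ∑ j, g j = g i + ∑ j ∈ univ.erase i, g j :=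
            (Finset.add_sum_erase univ g (mem_univ i)).symm
        _ = (∑ v, ∑ a, (∑ π ∈ univ.filter (fun π => π i = v), z π i a (t - 1)) * p i v a u)
              + ∑ j ∈ univ.erase i, h j := by
            rw [hB]
            congr 1
            exact Finset.sum_congr rfl fun j hj => hA j (Finset.ne_of_mem_erase hj)
    have hhs : ∑ j, h j = h i + ∑ j ∈ univ.erase i, h j :=
      (Finset.add_sum_erase univ h (mem_univ i)).symm
    have hhi : ∑ a, ∑ π ∈ univ.filter (fun π => π i = u), z π i a (t - 1) = h i :=
      Finset.sum_comm
    rw [expand, Finset.sum_add_distrib, Finset.sum_sub_distrib, hgsum, hzsum, hgs, hhs,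
      hhi]
    ring
  · -- objectives
    refine Finset.sum_congr rfl fun t _ => ?_
    rw [Finset.sum_comm]
    refine Finset.sum_congr rfl fun i _ => ?_
    have : ∑ u, ∑ a, r i u a * (∑ π ∈ univ.filter (fun π => π i = u), z π i a t)
        = ∑ u, ∑ π ∈ univ.filter (fun π => π i = u), ∑ a, r i (π i) a * z π i a t := by
      refine Finset.sum_congr rfl fun u _ => ?_
      calc ∑ a, r i u a * (∑ π ∈ univ.filter (fun π => π i = u), z π i a t)
          = ∑ a, ∑ π ∈ univ.filter (fun π => π i = u), r i u a * z π i a t :=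
            Finset.sum_congr rfl fun a _ => by rw [Finset.mul_sum]
        _ = ∑ π ∈ univ.filter (fun π => π i = u), ∑ a, r i u a * z π i a t :=
            Finset.sum_comm
        _ = ∑ π ∈ univ.filter (fun π => π i = u), ∑ a, r i (π i) a * z π i a t := by
            refine Finset.sum_congr rfl fun π hπ => ?_
            simp only [mem_filter, mem_univ, true_and] at hπ
            rw [hπ]
    rw [this]
    exact Finset.sum_fiberwise univ (fun π => π i) (fun π => ∑ a, r i (π i) a * z π i a t)
end

section
/- In the algorithm of Theorem 2.1, for every arm $i$, every node $u \in \mathcal{S}_i$, and time $t \in [B]$, the probability that the algorithm ever plays arm $i$ from status $(u,t)$ equals $x_{u,t}/3$, where $\{x_{u,t}\}$ is the fixed optimal LP solution. -/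
open Finset

/-- In the algorithm of Theorem 2.1 on a layered arm with root `ρ`: the probability
`P u t` that the algorithm ever plays the arm from status `(u,t)` — initialized to
`x_{ρ,t}/3` at the root and propagated by the transition/priority probabilities
`p`, `q` (where `q` is the flow decomposition of the optimal LP solution `x`) —
equals `x_{u,t}/3` for every node `u` and `t ∈ [B]`. -/
theorem stmt13 {V : Type*} [Fintype V] (B : ℕ) (ρ : V) (depth : V → ℕ)
    (p : V → V → ℝ) (q : V → ℕ → V → ℕ → ℝ) (x : V → ℕ → ℝ) (P : V → ℕ → ℝ)
    -- layered, acyclic, rooted structure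
    (hdepthρ : depth ρ = 0)
    (hlayer : ∀ v u, p v u ≠ 0 → depth u = depth v + 1)
    (hroot : ∀ u, depth u = 0 → u = ρ)
    -- flow decomposition property of the q's (Lemma 2.2)
    (hflow : ∀ u, u ≠ ρ → ∀ t ∈ Icc 1 B,
      ∑ v, (∑ t' ∈ Icc 1 (t - 1), x v t' * q v t' u t) * p v u = x u t)
    -- each arm is initialized to status (ρ,t) with probability x_{ρ,t}/3
    (hinit : ∀ t ∈ Icc 1 B, P ρ t = x ρ t / 3)
    -- upon playing status (v,t') and transitioning to u, move to status (u,t)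
    -- with probability q_{v,t',u,t}
    (hrec : ∀ u, u ≠ ρ → ∀ t ∈ Icc 1 B,
      P u t = ∑ v, ∑ t' ∈ Icc 1 (t - 1), P v t' * p v u * q v t' u t) :
    ∀ u, ∀ t ∈ Icc 1 B, P u t = x u t / 3 := by
  have main : ∀ n u, depth u = n → ∀ t ∈ Icc 1 B, P u t = x u t / 3 := by
    intro n
    induction n using Nat.strong_induction_on with
    | _ n ih =>
      intro u hn t ht
      by_cases hu : u = ρ
      · subst hu; exact hinit t ht
      · rw [hrec u hu t ht, ← hflow u hu t ht, Finset.sum_div]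
        refine Finset.sum_congr rfl fun v _ => ?_
        by_cases hp : p v u = 0
        · simp [hp]
        · have hd : depth u = depth v + 1 := hlayer v u hp
          rw [Finset.sum_mul, Finset.sum_div]
          refine Finset.sum_congr rfl fun t' ht' => ?_
          simp only [mem_Icc] at ht ht'
          have hPv : P v t' = x v t' / 3 := by
            refine ih (depth v) (by omega) v rfl t' ?_
            simp only [mem_Icc]; omega
          rw [hPv]; ring
  intro u; exact main (depth u) u rfl
end

section
/- Suppose nonnegative reals $x_{j,t'}$ (for $j\in[n]$, $t'\in[B]$) satisfy $\sum_j \sum_{t'\le t} x_{j,t'} \Pr[S_j > t-t'] \le 1$ and $\sum_{t'\le B} x_{j,t'} \le 1$, and an event collection satisfies $\Pr[\mathcal{X}_{j,t'}] \le (1-\varepsilon)\frac{x_{j,t'}}{2} + \frac{\varepsilon}{4Bn}$ for all $j, t' < t$. If $F = 1 - \sum_{t'<t}\Pr[\mathcal{X}_{i,t'}] - \sum_j\sum_{t'<t}\Pr[\mathcal{X}_{j,t'}]\Pr[S_j > t-t']$ is a lower bound for $\mathrm{Free}(i,t)$, then $\mathrm{Free}(i,t) \ge \sum_{j=1}^n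 \frac{x_{j,t}}{2}$. -/
open Finset

/-- Key inequality of the sampling analysis: with `g j s = Pr[S_j > s]`,
`q j t' = Pr[𝒳_{j,t'}] ≤ (1-ε)x_{j,t'}/2 + ε/(4Bn)` for `t' < t`, LP-feasible `x`, and
`Free(i,t)` bounded below by the union bound expression `F`, one gets
`Free(i,t) ≥ ∑ⱼ x_{j,t}/2`. -/
theorem stmt17 (n B : ℕ) (hn : 1 ≤ n) (hB : 1 ≤ B)
    (x g q : Fin n → ℕ → ℝ) (ε : ℝ) (hε0 : 0 ≤ ε) (hε1 : ε ≤ 1)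
    (i : Fin n) (t : ℕ) (ht : t ∈ Icc 1 B)
    (hxnn : ∀ j t', 0 ≤ x j t')
    (hg0 : ∀ j, g j 0 = 1) (hgnn : ∀ j s, 0 ≤ g j s) (hg1 : ∀ j s, g j s ≤ 1)
    (hqnn : ∀ j t', 0 ≤ q j t')
    -- (P1') of (LP') at time t
    (hload : ∑ j, ∑ t' ∈ Icc 1 t, x j t' * g j (t - t') ≤ 1)
    (hone : ∀ j, ∑ t' ∈ Icc 1 B, x j t' ≤ 1)
    -- Pr[𝒳_{j,t'}] ≤ (1-ε)·x_{j,t'}/2 + ε/(4Bn)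
    (hq : ∀ j t', q j t' ≤ (1 - ε) * x j t' / 2 + ε / (4 * B * n))
    (Free F : ℝ)
    (hF : F = 1 - (∑ t' ∈ Ico 1 t, q i t')
      - ∑ j, ∑ t' ∈ Ico 1 t, q j t' * g j (t - t'))
    (hFree : F ≤ Free) :
    ∑ j, x j t / 2 ≤ Free := by
  obtain ⟨ht1, htB⟩ := mem_Icc.mp ht
  have hn' : (1:ℝ) ≤ n := by exact_mod_cast hn
  have hB' : (1:ℝ) ≤ B := by exact_mod_cast hB
  have hεε : 0 ≤ 1 - ε := by linarith
  set S := ∑ j, x j t with hSdef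
  have hsplit : ∀ j : Fin n, ∑ t' ∈ Icc 1 t, x j t' * g j (t - t')
      = (∑ t' ∈ Ico 1 t, x j t' * g j (t - t')) + x j t := by
    intro j
    rw [← Finset.Ico_add_one_right_eq_Icc, Finset.sum_Ico_succ_top ht1]
    simp [hg0]
  have hIco_nn : ∀ j : Fin n, (0:ℝ) ≤ ∑ t' ∈ Ico 1 t, x j t' * g j (t - t') :=
    fun j => Finset.sum_nonneg fun t' _ => mul_nonneg (hxnn j t') (hgnn j _)
  have hload' : (∑ j, ∑ t' ∈ Ico 1 t, x j t' * g j (t - t')) + S ≤ 1 := by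
    have h := hload
    rw [Finset.sum_congr rfl (fun j _ => hsplit j), Finset.sum_add_distrib] at h
    exact h
  have hS1 : S ≤ 1 := by
    have := Finset.sum_nonneg (fun j (_ : j ∈ Finset.univ) => hIco_nn j)
    linarith
  have hIcoSum : ∑ j, ∑ t' ∈ Ico 1 t, x j t' * g j (t - t') ≤ 1 - S := by linarith
  -- card bound
  have hcard : ((Ico 1 t).card : ℝ) ≤ B := by
    have : (Ico 1 t).card = t - 1 := by simp
    rw [this]
    have : t - 1 ≤ B := by omega
    exact_mod_cast this
  have hcard_nn : (0:ℝ) ≤ ((Ico 1 t).card : ℝ) := Nat.cast_nonneg _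
  have hεB : (0:ℝ) ≤ ε / (4 * B * n) := by positivity
  have hεcard : ((Ico 1 t).card : ℝ) * (ε / (4 * B * n)) ≤ ε / (4 * n) := by
    have h1 : ((Ico 1 t).card : ℝ) * (ε / (4 * B * n)) ≤ B * (ε / (4 * B * n)) :=
      mul_le_mul_of_nonneg_right hcard hεB
    have h2 : (B:ℝ) * (ε / (4 * B * n)) = ε / (4 * n) := by
      field_simp
    linarith
  have hεn : ε / (4 * n) ≤ ε / 4 := by
    apply div_le_div_of_nonneg_left hε0 (by norm_num)
    linarith
  -- bound A
  have hA : ∑ t' ∈ Ico 1 t, q i t' ≤ (1 - ε) / 2 + ε / 4 := by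
    have hxsub : ∑ t' ∈ Ico 1 t, x i t' ≤ 1 := by
      refine le_trans (Finset.sum_le_sum_of_subset_of_nonneg ?_
        (fun k _ _ => hxnn i k)) (hone i)
      intro k hk
      rw [Finset.mem_Ico] at hk
      rw [Finset.mem_Icc]
      omega
    calc ∑ t' ∈ Ico 1 t, q i t'
        ≤ ∑ t' ∈ Ico 1 t, ((1 - ε) * x i t' / 2 + ε / (4 * B * n)) :=
          Finset.sum_le_sum fun t' _ => hq i t'
      _ = (1 - ε) / 2 * (∑ t' ∈ Ico 1 t, x i t')
            + ((Ico 1 t).card : ℝ) * (ε / (4 * B * n)) := by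
          rw [Finset.sum_add_distrib, Finset.sum_const, nsmul_eq_mul, Finset.mul_sum]
          congr 1
          exact Finset.sum_congr rfl fun t' _ => by ring
      _ ≤ (1 - ε) / 2 * 1 + ε / 4 :=
          add_le_add (mul_le_mul_of_nonneg_left hxsub (by linarith))
            (le_trans hεcard hεn)
      _ = (1 - ε) / 2 + ε / 4 := by ring
  -- bound C
  have hC : ∑ j, ∑ t' ∈ Ico 1 t, q j t' * g j (t - t')
      ≤ (1 - ε) / 2 * (1 - S) + ε / 4 := by
    have hstep : ∀ j : Fin n, ∑ t' ∈ Ico 1 t, q j t' * g j (t - t')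
        ≤ (1 - ε) / 2 * (∑ t' ∈ Ico 1 t, x j t' * g j (t - t'))
          + ((Ico 1 t).card : ℝ) * (ε / (4 * B * n)) := by
      intro j
      calc ∑ t' ∈ Ico 1 t, q j t' * g j (t - t')
          ≤ ∑ t' ∈ Ico 1 t, ((1 - ε) / 2 * (x j t' * g j (t - t')) + ε / (4 * B * n)) := by
            apply Finset.sum_le_sum
            intro t' _
            have h1 : q j t' * g j (t - t')
                ≤ ((1 - ε) * x j t' / 2 + ε / (4 * B * n)) * g j (t - t') :=
              mul_le_mul_of_nonneg_right (hq j t') (hgnn j _)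
            have h2 : ((1 - ε) * x j t' / 2 + ε / (4 * B * n)) * g j (t - t')
                ≤ (1 - ε) / 2 * (x j t' * g j (t - t')) + ε / (4 * B * n) := by
              have := mul_le_mul_of_nonneg_left (hg1 j (t - t')) hεB
              nlinarith [hg1 j (t - t'), hgnn j (t - t')]
            linarith
        _ = (1 - ε) / 2 * (∑ t' ∈ Ico 1 t, x j t' * g j (t - t'))
            + ((Ico 1 t).card : ℝ) * (ε / (4 * B * n)) := by
            rw [Finset.sum_add_distrib, Finset.sum_const, nsmul_eq_mul, Finset.mul_sum]
    calc ∑ j, ∑ t' ∈ Ico 1 t, q j t' * g j (t - t')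
        ≤ ∑ j : Fin n, ((1 - ε) / 2 * (∑ t' ∈ Ico 1 t, x j t' * g j (t - t'))
            + ((Ico 1 t).card : ℝ) * (ε / (4 * B * n))) :=
          Finset.sum_le_sum fun j _ => hstep j
      _ = (1 - ε) / 2 * (∑ j, ∑ t' ∈ Ico 1 t, x j t' * g j (t - t'))
            + (n : ℝ) * (((Ico 1 t).card : ℝ) * (ε / (4 * B * n))) := by
          rw [Finset.sum_add_distrib, Finset.sum_const, nsmul_eq_mul, Finset.mul_sum]
          simp
      _ ≤ (1 - ε) / 2 * (1 - S) + (n : ℝ) * (ε / (4 * n)) :=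
          add_le_add (mul_le_mul_of_nonneg_left hIcoSum (by linarith))
            (mul_le_mul_of_nonneg_left hεcard (Nat.cast_nonneg n))
      _ ≤ (1 - ε) / 2 * (1 - S) + ε / 4 := by
          have hnpos : (0:ℝ) < n := by linarith
          have : (n : ℝ) * (ε / (4 * n)) = ε / 4 := by
            field_simp
          linarith [this.le]
  have hhalf : ∑ j, x j t / 2 = S / 2 := by
    rw [hSdef, Finset.sum_div]
  rw [hhalf]
  nlinarith [hA, hC, hS1, hε0]
end

section
/- In the stochastic knapsack instance with knapsack size 10 and items $I_1$ (size 6 w.p. 1/2, size 1 w.p. 1/2, reward 4), $I_2$ (size 9 deterministically, reward 9), $I_3$ (size 8 w.p. 1/2, size 4 w.p. 1/2, reward 8): the optimal preempting policy achieves expected reward $11.5$, while every policy that may cancel but not preempt achieves expected reward at most $11$. -/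
open Finset

namespace S18

/-- Outcome space: the coin of item `I₁` (size 6 or 1) and the coin of item `I₃`
(size 8 or 4), each fair and independent; four equiprobable outcomes. -/
abbrev Out := Bool × Bool

/-- Realized sizes: item 0 = `I₁` (size 6 w.p. 1/2, size 1 w.p. 1/2),
item 1 = `I₂` (size 9 deterministically), item 2 = `I₃` (size 8 w.p. 1/2,
size 4 w.p. 1/2). -/
def sz (ω : Out) : Fin 3 → ℕ := fun i =>
  if i = 0 then (if ω.1 then 6 else 1)
  else if i = 1 then 9
  else (if ω.2 then 8 else 4)

/-- Rewards of `I₁, I₂, I₃`. -/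
def rw : Fin 3 → ℝ := fun i => if i = 0 then 4 else if i = 1 then 9 else 8

/-- A policy: at each of the 10 time steps (one unit of knapsack capacity each),
which item (if any) receives one unit of processing; this may depend on the outcome
only through what has been observed (adaptedness below). -/
abbrev Policy := ℕ → Out → Option (Fin 3)

/-- Units of processing item `i` has received during the first `t` steps
(only the 10 steps of the knapsack count). -/
def units (a : Policy) (ω : Out) (t : ℕ) (i : Fin 3) : ℕ :=
  ((Finset.range (min t 10)).filter (fun t' => a t' ω = some i)).card

/-- Adaptedness: if two outcomes have produced the same actions and the same
completion observations up to time `t`, the policy acts identically at time `t`. -/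
def Adapted (a : Policy) : Prop :=
  ∀ (ω ω' : Out) (t : ℕ),
    (∀ t' < t, a t' ω = a t' ω') →
    (∀ t' < t, ∀ i : Fin 3,
      (sz ω i ≤ units a ω (t' + 1) i ↔ sz ω' i ≤ units a ω' (t' + 1) i)) →
    a t ω = a t ω'

/-- No preemption (cancelling only): the processing steps devoted to any fixed item
are contiguous — once the policy switches away from an item it never returns. -/
def NoPreempt (a : Policy) : Prop :=
  ∀ (ω : Out) (i : Fin 3) (t₁ t₂ t₃ : ℕ), t₁ ≤ t₂ → t₂ ≤ t₃ →
    a t₁ ω = some i → a t₃ ω = some i → a t₂ ω = some i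

/-- Expected reward: an item pays its reward iff it is fully processed within the
knapsack of size 10; the four outcomes are equiprobable. -/
noncomputable def expReward (a : Policy) : ℝ :=
  (1 / 4 : ℝ) * ∑ ω : Out, ∑ i : Fin 3,
    (if sz ω i ≤ units a ω 10 i then rw i else 0)

end S18



namespace S18

def pol : Policy := fun t ω =>
  if 10 ≤ t then none
  else if t = 0 then some 0
  else if ω.1 = false then some 1
  else if t < 5 then some 2
  else if ω.2 = false then some 0
  else if t < 9 then some 2
  else none

lemma pol_adapted : Adapted pol := by
  intro ω ω' t h1 h2
  rcases ω with ⟨b1, b2⟩; rcases ω' with ⟨c1, c2⟩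
  by_cases h10 : 10 ≤ t
  · simp [pol, h10]
  by_cases ht0 : t = 0
  · subst ht0; simp [pol]
  have hb : b1 = c1 := by
    have h := h2 0 (by omega) 0
    have u1 : ∀ ω : Out, units pol ω 1 0 = 1 := by decide
    rw [u1, u1] at h
    simp only [sz] at h
    cases b1 <;> cases c1 <;> simp_all
  subst hb
  cases b1 with
  | false => simp [pol, h10, ht0]
  | true =>
    by_cases ht5 : t < 5
    · simp [pol, h10, ht0, ht5]
    · have hb2 : b2 = c2 := by
        have h := h2 4 (by omega) 2
        have u2 : ∀ b : Bool, units pol (true, b) 5 2 = 4 := by decide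
        rw [u2, u2] at h
        simp only [sz] at h
        cases b2 <;> cases c2 <;> simp_all
      subst hb2; rfl

lemma pol_exp : expReward pol = 23 / 2 := by
  have c1 : sz (false, false) 0 ≤ units pol (false, false) 10 0 := by decide
  have c2 : sz (false, false) 1 ≤ units pol (false, false) 10 1 := by decide
  have c3 : ¬ sz (false, false) 2 ≤ units pol (false, false) 10 2 := by decide
  have c4 : sz (false, true) 0 ≤ units pol (false, true) 10 0 := by decide
  have c5 : sz (false, true) 1 ≤ units pol (false, true) 10 1 := by decide
  have c6 : ¬ sz (false, true) 2 ≤ units pol (false, true) 10 2 := by decide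
  have c7 : sz (true, false) 0 ≤ units pol (true, false) 10 0 := by decide
  have c8 : ¬ sz (true, false) 1 ≤ units pol (true, false) 10 1 := by decide
  have c9 : sz (true, false) 2 ≤ units pol (true, false) 10 2 := by decide
  have c10 : ¬ sz (true, true) 0 ≤ units pol (true, true) 10 0 := by decide
  have c11 : ¬ sz (true, true) 1 ≤ units pol (true, true) 10 1 := by decide
  have c12 : sz (true, true) 2 ≤ units pol (true, true) 10 2 := by decide
  rw [expReward, Fintype.sum_prod_type]
  rw [Fintype.sum_bool, Fintype.sum_bool, Fintype.sum_bool]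
  rw [Fin.sum_univ_three, Fin.sum_univ_three, Fin.sum_univ_three, Fin.sum_univ_three]
  rw [if_pos c1, if_pos c2, if_neg c3, if_pos c4, if_pos c5, if_neg c6,
    if_pos c7, if_neg c8, if_pos c9, if_neg c10, if_neg c11, if_pos c12]
  norm_num [rw, show ((2:Fin 3) ≠ 0) from by decide, show ((2:Fin 3) ≠ 1) from by decide]

/- ### Auxiliary lemmas -/

variable {a : Policy}

lemma units_mono (a : Policy) (ω : Out) {t t' : ℕ} (h : t ≤ t') (i : Fin 3) :
    units a ω t i ≤ units a ω t' i :=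
  Finset.card_le_card (Finset.filter_subset_filter _ (Finset.range_subset_range.2 (by omega)))

lemma units_le (a : Policy) (ω : Out) (t : ℕ) (i : Fin 3) :
    units a ω t i ≤ min t 10 :=
  (Finset.card_filter_le _ _).trans_eq (Finset.card_range _)

lemma units_add_le (a : Policy) (ω : Out) (t : ℕ) :
    units a ω t 0 + units a ω t 1 + units a ω t 2 ≤ min t 10 := by
  classical
  unfold units
  rw [Finset.card_filter, Finset.card_filter, Finset.card_filter,
    ← Finset.sum_add_distrib, ← Finset.sum_add_distrib]
  calc ∑ t' ∈ Finset.range (min t 10),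
      ((if a t' ω = some 0 then 1 else 0) + (if a t' ω = some 1 then 1 else 0)
        + (if a t' ω = some 2 then 1 else 0))
      ≤ ∑ _t' ∈ Finset.range (min t 10), 1 := by
        apply Finset.sum_le_sum
        intro x _
        split_ifs <;> simp_all
    _ = min t 10 := by simp

lemma units_add_le_of_none (ω : Out) (h : a 0 ω = none) :
    units a ω 10 0 + units a ω 10 1 + units a ω 10 2 ≤ 9 := by
  classical
  unfold units
  rw [Finset.card_filter, Finset.card_filter, Finset.card_filter,
    ← Finset.sum_add_distrib, ← Finset.sum_add_distrib]
  calc ∑ t' ∈ Finset.range (min 10 10),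
      ((if a t' ω = some 0 then 1 else 0) + (if a t' ω = some 1 then 1 else 0)
        + (if a t' ω = some 2 then 1 else 0))
      ≤ ∑ t' ∈ Finset.range (min 10 10), (if t' = 0 then 0 else 1) := by
        apply Finset.sum_le_sum
        intro x _
        split_ifs <;> simp_all
    _ = 9 := by decide

lemma units_pos (ω : Out) {s : ℕ} {i : Fin 3} (hs : s < 10) (h : a s ω = some i) :
    1 ≤ units a ω 10 i := by
  apply Finset.card_pos.2
  exact ⟨s, Finset.mem_filter.2 ⟨Finset.mem_range.2 (by omega), h⟩⟩

lemma units_eq_zero (ω : Out) (u : ℕ) (i : Fin 3)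
    (h : ∀ t' < min u 10, a t' ω ≠ some i) : units a ω u i = 0 := by
  unfold units
  rw [Finset.card_eq_zero, Finset.filter_eq_empty_iff]
  intro x hx
  exact h x (Finset.mem_range.1 hx)

lemma units_eq_full (ω : Out) (u : ℕ) (i : Fin 3)
    (h : ∀ t' < min u 10, a t' ω = some i) : units a ω u i = min u 10 := by
  unfold units
  rw [Finset.filter_true_of_mem (fun x hx => h x (Finset.mem_range.1 hx)), Finset.card_range]

lemma units_le_sub (ω : Out) (u k : ℕ) (i : Fin 3)
    (h : ∀ t' < k, a t' ω ≠ some i) : units a ω u i ≤ min u 10 - k := by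
  have hsub : (Finset.range (min u 10)).filter (fun t' => a t' ω = some i)
      ⊆ Finset.Ico k (min u 10) := by
    intro x hx
    rw [Finset.mem_filter, Finset.mem_range] at hx
    rw [Finset.mem_Ico]
    refine ⟨?_, hx.1⟩
    by_contra hk
    exact h x (by omega) hx.2
  have := Finset.card_le_card hsub
  rw [Nat.card_Ico] at this
  exact this

lemma units_eq_of_agree (a : Policy) (ω ω' : Out) (N : ℕ)
    (h : ∀ t < N, a t ω = a t ω') :
    ∀ s ≤ N, ∀ i, units a ω s i = units a ω' s i := by
  intro s hs i
  unfold units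
  congr 1
  apply Finset.filter_congr
  intro t ht
  rw [Finset.mem_range] at ht
  rw [h t (by omega)]

lemma agree_until (ha : Adapted a) (ω ω' : Out) (N : ℕ)
    (H : ∀ u < N, ∀ i, (sz ω i ≤ units a ω u i ↔ sz ω' i ≤ units a ω u i)) :
    ∀ t < N, a t ω = a t ω' := by
  intro t
  induction t using Nat.strong_induction_on with
  | _ t IH =>
    intro htN
    apply ha
    · intro t' ht'; exact IH t' ht' (ht'.trans htN)
    · intro t' ht' i
      have hu := units_eq_of_agree a ω ω' t (fun s hs => IH s hs (hs.trans htN))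
        (t' + 1) (by omega) i
      rw [← hu]
      exact H (t' + 1) (by omega) i

lemma prefix_lemma (hnp : NoPreempt a) (ω : Out) (i : Fin 3) (h0 : a 0 ω = some i) :
    ∀ t, t < units a ω 10 i → a t ω = some i := by
  intro t ht
  by_contra hne
  have hsub : (Finset.range (min 10 10)).filter (fun t' => a t' ω = some i)
      ⊆ Finset.range t := by
    intro s hs
    rw [Finset.mem_filter] at hs
    rw [Finset.mem_range]
    by_contra hst
    exact hne (hnp ω i 0 t s (Nat.zero_le _) (by omega) h0 hs.2)
  have := Finset.card_le_card hsub
  rw [Finset.card_range] at this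
  unfold units at ht
  omega


noncomputable def R (a : Policy) (ω : Out) : ℝ :=
  ∑ i : Fin 3, (if sz ω i ≤ units a ω 10 i then rw i else 0)

lemma expReward_eq (a : Policy) :
    expReward a = (1 / 4 : ℝ) * (R a (false, false) + R a (false, true)
      + R a (true, false) + R a (true, true)) := by
  rw [expReward, Fintype.sum_prod_type, Fintype.sum_bool, Fintype.sum_bool, Fintype.sum_bool]
  unfold R
  ring

lemma rw0 : rw 0 = 4 := by norm_num [rw]
lemma rw1 : rw 1 = 9 := by
  norm_num [rw, show ((1 : Fin 3) ≠ 0) from by decide]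
lemma rw2 : rw 2 = 8 := by
  norm_num [rw, show ((2 : Fin 3) ≠ 0) from by decide, show ((2 : Fin 3) ≠ 1) from by decide]

lemma s0f (b : Bool) : sz (false, b) 0 = 1 := by revert b; decide
lemma s0t (b : Bool) : sz (true, b) 0 = 6 := by revert b; decide
lemma s1 (ω : Out) : sz ω 1 = 9 := by revert ω; decide
lemma s2f (b : Bool) : sz (b, false) 2 = 4 := by revert b; decide
lemma s2t (b : Bool) : sz (b, true) 2 = 8 := by revert b; decide

lemma R_eq (a : Policy) (ω : Out) :
    R a ω = (if sz ω 0 ≤ units a ω 10 0 then (4:ℝ) else 0)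
      + (if sz ω 1 ≤ units a ω 10 1 then (9:ℝ) else 0)
      + (if sz ω 2 ≤ units a ω 10 2 then (8:ℝ) else 0) := by
  rw [R, Fin.sum_univ_three, rw0, rw1, rw2]

lemma B13 (a : Policy) (b : Bool) : R a (false, b) ≤ 13 := by
  have hsum := units_add_le a (false, b) 10
  rw [R_eq, s0f, s1]
  cases b
  · rw [s2f]; split_ifs <;> [skip; skip; skip; skip; skip; skip; skip; skip] <;>
      first
        | (exfalso; omega)
        | norm_num
  · rw [s2t]; split_ifs <;>
      first
        | (exfalso; omega)
        | norm_num

lemma B12tf (a : Policy) : R a (true, false) ≤ 12 := by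
  have hsum := units_add_le a (true, false) 10
  rw [R_eq, s0t, s1, s2f]
  split_ifs <;> first | (exfalso; omega) | norm_num

lemma B9tf (a : Policy)
    (h : ¬ (6 ≤ units a (true, false) 10 0 ∧ 4 ≤ units a (true, false) 10 2)) :
    R a (true, false) ≤ 9 := by
  have hsum := units_add_le a (true, false) 10
  rw [R_eq, s0t, s1, s2f]
  split_ifs <;> first | (exfalso; omega) | norm_num

lemma B9tt (a : Policy) : R a (true, true) ≤ 9 := by
  have hsum := units_add_le a (true, true) 10
  rw [R_eq, s0t, s1, s2t]
  split_ifs <;> first | (exfalso; omega) | norm_num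

lemma B8tt (a : Policy) (h : ¬ 9 ≤ units a (true, true) 10 1) : R a (true, true) ≤ 8 := by
  have hsum := units_add_le a (true, true) 10
  rw [R_eq, s0t, s1, s2t]
  split_ifs <;> first | (exfalso; omega) | norm_num

lemma B4tt (a : Policy) (h1 : ¬ 9 ≤ units a (true, true) 10 1)
    (h2 : ¬ 8 ≤ units a (true, true) 10 2) : R a (true, true) ≤ 4 := by
  have hsum := units_add_le a (true, true) 10
  rw [R_eq, s0t, s1, s2t]
  split_ifs <;> first | (exfalso; omega) | norm_num

lemma B12ff (a : Policy) (h : ¬ 9 ≤ units a (false, false) 10 1) :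
    R a (false, false) ≤ 12 := by
  have hsum := units_add_le a (false, false) 10
  rw [R_eq, s0f, s1, s2f]
  split_ifs <;> first | (exfalso; omega) | norm_num

lemma B12ft (a : Policy) (h : ¬ 9 ≤ units a (false, true) 10 1) :
    R a (false, true) ≤ 12 := by
  have hsum := units_add_le a (false, true) 10
  rw [R_eq, s0f, s1, s2t]
  split_ifs <;> first | (exfalso; omega) | norm_num

lemma F1 (ha : Adapted a) (h2 : 4 ≤ units a (true, false) 10 2) :
    units a (true, true) 10 1 ≤ 6 := by
  classical
  have hex : ∃ t, 4 ≤ units a (true, false) t 2 := ⟨10, h2⟩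
  have hspec : 4 ≤ units a (true, false) (Nat.find hex) 2 := Nat.find_spec hex
  have ht10 : Nat.find hex ≤ 10 := Nat.find_le h2
  have hmin : ∀ u < Nat.find hex, units a (true, false) u 2 < 4 := fun u hu => by
    simpa using Nat.find_min hex hu
  have hag : ∀ t < Nat.find hex, a t (true, false) = a t (true, true) := by
    apply agree_until ha
    intro u hu i
    fin_cases i
    · show sz (true, false) 0 ≤ units a (true, false) u 0 ↔
        sz (true, true) 0 ≤ units a (true, false) u 0
      rw [show sz (true, false) 0 = sz (true, true) 0 from by decide]
    · show sz (true, false) 1 ≤ units a (true, false) u 1 ↔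
        sz (true, true) 1 ≤ units a (true, false) u 1
      rw [show sz (true, false) 1 = sz (true, true) 1 from by decide]
    · show sz (true, false) 2 ≤ units a (true, false) u 2 ↔
        sz (true, true) 2 ≤ units a (true, false) u 2
      have := hmin u hu
      rw [show sz (true, false) 2 = 4 from by decide, show sz (true, true) 2 = 8 from by decide]
      omega
  have heq := units_eq_of_agree a _ _ (Nat.find hex) hag (Nat.find hex) le_rfl 2
  have h4 : 4 ≤ units a (true, true) 10 2 :=
    le_trans (heq ▸ hspec) (units_mono a _ ht10 2)
  have hsum := units_add_le a (true, true) 10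
  omega

lemma part2 (ha : Adapted a) :
    R a (false, false) + R a (false, true) + R a (true, false) + R a (true, true) ≤ 46 := by
  by_cases hB : 4 ≤ units a (true, false) 10 2
  · have h8 : R a (true, true) ≤ 8 := B8tt a (by have := F1 ha hB; omega)
    linarith [B13 a false, B13 a true, B12tf a]
  · have h9 : R a (true, false) ≤ 9 := B9tf a (by omega)
    linarith [B13 a false, B13 a true, B9tt a]

lemma part3 (ha : Adapted a) (hnp : NoPreempt a) :
    R a (false, false) + R a (false, true) + R a (true, false) + R a (true, true) ≤ 44 := by
  classical
  by_cases hB : 6 ≤ units a (true, false) 10 0 ∧ 4 ≤ units a (true, false) 10 2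
  · obtain ⟨hB0, hB2⟩ := hB
    have hsumtf := units_add_le a (true, false) 10
    have hU0 : units a (true, false) 10 0 = 6 := by omega
    have hU1 : units a (true, false) 10 1 = 0 := by omega
    have hU2 : units a (true, false) 10 2 = 4 := by omega
    have htt8 : R a (true, true) ≤ 8 := B8tt a (by have := F1 ha hB2; omega)
    by_cases hc2 : 8 ≤ units a (true, true) 10 2
    · -- the main case: the run on (true,false) starts with I₃
      have ha0 : a 0 (true, false) = some 2 := by
        rcases h : a 0 (true, false) with _ | i
        · have := units_add_le_of_none (true, false) h
          omega
        · have hi : i = 0 ∨ i = 1 ∨ i = 2 := by fin_cases i <;> simp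
          rcases hi with rfl | rfl | rfl
          · exfalso
            have hpre6 : ∀ t < 6, a t (true, false) = some 0 := fun t ht =>
              prefix_lemma hnp _ 0 h t (by omega)
            have hlt : ∀ u < 10, units a (true, false) u 2 < 4 := by
              intro u hu
              have hs := units_le_sub (a := a) (true, false) u 6 2 (fun t' ht' => by
                rw [hpre6 t' ht']; simp)
              omega
            have hag : ∀ t < 10, a t (true, false) = a t (true, true) := by
              apply agree_until ha
              intro u hu i
              fin_cases i
              · show sz (true, false) 0 ≤ units a (true, false) u 0 ↔
                  sz (true, true) 0 ≤ units a (true, false) u 0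
                rw [show sz (true, false) 0 = sz (true, true) 0 from by decide]
              · show sz (true, false) 1 ≤ units a (true, false) u 1 ↔
                  sz (true, true) 1 ≤ units a (true, false) u 1
                rw [show sz (true, false) 1 = sz (true, true) 1 from by decide]
              · show sz (true, false) 2 ≤ units a (true, false) u 2 ↔
                  sz (true, true) 2 ≤ units a (true, false) u 2
                have := hlt u hu
                rw [show sz (true, false) 2 = 4 from by decide,
                  show sz (true, true) 2 = 8 from by decide]
                omega
            have heq := units_eq_of_agree a _ _ 10 hag 10 le_rfl 2
            omega
          · exfalso
            have := units_pos (true, false) (show (0:ℕ) < 10 by omega) h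
            omega
          · rfl
      have hpre4 : ∀ t < 4, a t (true, false) = some 2 := fun t ht =>
        prefix_lemma hnp _ 2 ha0 t (by omega)
      have hItf : ∀ t, 4 ≤ t → t < 10 → a t (true, false) = some 0 := by
        intro t h4t h10t
        have hsub : (Finset.range (min 10 10)).filter (fun t' => a t' (true, false) = some 0)
            ⊆ Finset.Ico 4 10 := by
          intro s hs
          rw [Finset.mem_filter, Finset.mem_range] at hs
          rw [Finset.mem_Ico]
          refine ⟨?_, by omega⟩
          by_contra h4s
          have h2s := hpre4 s (by omega)
          rw [h2s] at hs
          simp at hs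
        have hrfl : units a (true, false) 10 0 =
            ((Finset.range (min 10 10)).filter (fun t' => a t' (true, false) = some 0)).card := rfl
        have hcard : (Finset.Ico 4 10).card ≤
            ((Finset.range (min 10 10)).filter (fun t' => a t' (true, false) = some 0)).card := by
          rw [Nat.card_Ico]
          omega
        have heq := Finset.eq_of_subset_of_card_le hsub hcard
        have hmem : t ∈ Finset.Ico 4 10 := Finset.mem_Ico.2 ⟨h4t, h10t⟩
        rw [← heq] at hmem
        exact (Finset.mem_filter.1 hmem).2
      have hag4 : ∀ t < 4, a t (true, false) = a t (true, true) := by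
        apply agree_until ha
        intro u hu i
        fin_cases i
        · show sz (true, false) 0 ≤ units a (true, false) u 0 ↔
            sz (true, true) 0 ≤ units a (true, false) u 0
          rw [show sz (true, false) 0 = sz (true, true) 0 from by decide]
        · show sz (true, false) 1 ≤ units a (true, false) u 1 ↔
            sz (true, true) 1 ≤ units a (true, false) u 1
          rw [show sz (true, false) 1 = sz (true, true) 1 from by decide]
        · show sz (true, false) 2 ≤ units a (true, false) u 2 ↔
            sz (true, true) 2 ≤ units a (true, false) u 2
          have := units_le a (true, false) u 2
          rw [show sz (true, false) 2 = 4 from by decide,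
            show sz (true, true) 2 = 8 from by decide]
          omega
      have ha0tt : a 0 (true, true) = some 2 := by
        rw [← hag4 0 (by omega)]; exact ha0
      have hpre8 : ∀ t < 8, a t (true, true) = some 2 := fun t ht =>
        prefix_lemma hnp _ 2 ha0tt t (by omega)
      have hagft : ∀ t < 9, a t (true, true) = a t (false, true) := by
        apply agree_until ha
        intro u hu i
        fin_cases i
        · show sz (true, true) 0 ≤ units a (true, true) u 0 ↔
            sz (false, true) 0 ≤ units a (true, true) u 0
          have h0 : units a (true, true) u 0 = 0 := units_eq_zero _ _ _ (fun t' ht' => by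
            rw [hpre8 t' (by omega)]; simp)
          rw [h0, show sz (true, true) 0 = 6 from by decide,
            show sz (false, true) 0 = 1 from by decide]
          omega
        · show sz (true, true) 1 ≤ units a (true, true) u 1 ↔
            sz (false, true) 1 ≤ units a (true, true) u 1
          rw [show sz (true, true) 1 = sz (false, true) 1 from by decide]
        · show sz (true, true) 2 ≤ units a (true, true) u 2 ↔
            sz (false, true) 2 ≤ units a (true, true) u 2
          rw [show sz (true, true) 2 = sz (false, true) 2 from by decide]
      have hft2 : 8 ≤ units a (false, true) 10 2 := by
        have hfull : units a (false, true) 8 2 = min 8 10 := units_eq_full _ _ _ (fun t' ht' => by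
          rw [← hagft t' (by omega)]
          exact hpre8 t' (by omega))
        have := units_mono a (false, true) (show (8:ℕ) ≤ 10 by omega) 2
        omega
      have hsumft := units_add_le a (false, true) 10
      have hRft : R a (false, true) ≤ 12 := B12ft a (by omega)
      have hagff : ∀ t < 5, a t (true, false) = a t (false, false) := by
        apply agree_until ha
        intro u hu i
        fin_cases i
        · show sz (true, false) 0 ≤ units a (true, false) u 0 ↔
            sz (false, false) 0 ≤ units a (true, false) u 0
          have h0 : units a (true, false) u 0 = 0 := units_eq_zero _ _ _ (fun t' ht' => by
            rw [hpre4 t' (by omega)]; simp)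
          rw [h0, show sz (true, false) 0 = 6 from by decide,
            show sz (false, false) 0 = 1 from by decide]
          omega
        · show sz (true, false) 1 ≤ units a (true, false) u 1 ↔
            sz (false, false) 1 ≤ units a (true, false) u 1
          rw [show sz (true, false) 1 = sz (false, false) 1 from by decide]
        · show sz (true, false) 2 ≤ units a (true, false) u 2 ↔
            sz (false, false) 2 ≤ units a (true, false) u 2
          rw [show sz (true, false) 2 = sz (false, false) 2 from by decide]
      have hff2 : 4 ≤ units a (false, false) 10 2 := by
        have hfull : units a (false, false) 4 2 = min 4 10 := units_eq_full _ _ _ (fun t' ht' => by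
          rw [← hagff t' (by omega)]
          exact hpre4 t' (by omega))
        have := units_mono a (false, false) (show (4:ℕ) ≤ 10 by omega) 2
        omega
      have hff0 : 1 ≤ units a (false, false) 10 0 := by
        apply units_pos (false, false) (show (4:ℕ) < 10 by omega)
        rw [← hagff 4 (by omega)]
        exact hItf 4 (by omega) (by omega)
      have hsumff := units_add_le a (false, false) 10
      have hRff : R a (false, false) ≤ 12 := B12ff a (by omega)
      linarith [B12tf a]
    · have h4 : R a (true, true) ≤ 4 := B4tt a (by have := F1 ha hB2; omega) hc2
      linarith [B13 a false, B13 a true, B12tf a]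
  · have h9 : R a (true, false) ≤ 9 := B9tf a hB
    linarith [B13 a false, B13 a true, B9tt a]


end S18

/-- In the knapsack-10 instance with items `I₁` (size 6 or 1 equiprobably, reward 4),
`I₂` (size 9, reward 9), `I₃` (size 8 or 4 equiprobably, reward 8): the optimal
preempting (adaptive) policy achieves expected reward exactly `11.5`, while every
adaptive policy that may cancel but not preempt achieves expected reward at most `11`. -/
theorem stmt18 :
    (∃ a : S18.Policy, S18.Adapted a ∧ S18.expReward a = 23 / 2) ∧
    (∀ a : S18.Policy, S18.Adapted a → S18.expReward a ≤ 23 / 2) ∧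
    (∀ a : S18.Policy, S18.Adapted a → S18.NoPreempt a → S18.expReward a ≤ 11) := by
  refine ⟨⟨S18.pol, S18.pol_adapted, S18.pol_exp⟩, ?_, ?_⟩
  · intro a ha
    have h := S18.part2 ha
    rw [S18.expReward_eq]
    linarith
  · intro a ha hnp
    have h := S18.part3 ha hnp
    rw [S18.expReward_eq]
    linarith
end

section
/- Let $Y_1, Y_2, Y_3$ be independent non-negative random variables with expectations $\mu_1 \ge \mu_2 \ge \mu_3$, each $\mu_i \le t/6$, $\mu_1+\mu_2+\mu_3 \le t/3$, where $Y_3 = \mu_3$ is constant and $Y_1, Y_2$ each take values in $\{0, t/2 - \mu_3\}$. Then $\Pr[Y_1+Y_2+Y_3 \ge t/2] \le 5/9$. -/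
open MeasureTheory ProbabilityTheory

private lemma samuels_k2_arith (t m p q a : ℝ) (ht : 0 < t) (hm : 0 ≤ m)
    (ha_def : a = t / 2 - m) (ha : 0 < a) (hp0 : 0 ≤ p) (hq0 : 0 ≤ q)
    (hp1 : p ≤ 1) (hq1 : q ≤ 1) (h1 : a * p ≤ t / 6) (h2 : a * q ≤ a * p)
    (h3 : m ≤ a * q) (h4 : a * p + a * q + m ≤ t / 3) : p + q - p * q ≤ 5 / 9 := by
  have key : (t / 6 - a * p) * (a - a * q) ≥ 0 := by
    apply mul_nonneg (by linarith)
    nlinarith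
  nlinarith [key, mul_pos ha ha, sq_nonneg (a * (p + q) - t / 3), sq_nonneg (t / 3 - a - m),
    mul_nonneg hm hm, mul_nonneg (mul_nonneg hm hm) hm, sq_nonneg (a * q - m),
    mul_nonneg hm (sub_nonneg.2 h3), mul_nonneg hm (sub_nonneg.2 h2),
    mul_nonneg hm (sub_nonneg.2 h1), mul_nonneg hm (sub_nonneg.2 h4),
    mul_nonneg (sub_nonneg.2 h4) (sub_nonneg.2 h1)]

/-- Extremal case `k = 2` of Samuels' configuration: `Y₂ = μ₃` is constant, `Y₀, Y₁`
are independent two-point variables with values in `{0, t/2 - μ₃}` and expectations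
`μ₁ ≥ μ₂ ≥ μ₃`, each at most `t/6`, summing to at most `t/3`.  Then
`Pr[Y₀ + Y₁ + Y₂ ≥ t/2] ≤ 5/9`. -/
theorem stmt19 {Ω : Type*} [MeasureSpace Ω] [IsProbabilityMeasure (ℙ : Measure Ω)]
    (Y : Fin 3 → Ω → ℝ) (t μ₁ μ₂ μ₃ : ℝ) (ht : 0 < t)
    (hmeas : ∀ i, Measurable (Y i))
    (hind : iIndepFun Y ℙ)
    (hnonneg : ∀ i ω, 0 ≤ Y i ω)
    (hint : ∀ i, Integrable (Y i))
    (hE0 : (∫ ω, Y 0 ω) = μ₁) (hE1 : (∫ ω, Y 1 ω) = μ₂) (hE2 : (∫ ω, Y 2 ω) = μ₃)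
    (hord : μ₃ ≤ μ₂ ∧ μ₂ ≤ μ₁)
    (hbd : μ₁ ≤ t / 6)
    (hsum : μ₁ + μ₂ + μ₃ ≤ t / 3)
    (hconst : ∀ ω, Y 2 ω = μ₃)
    (hval : ∀ ω, (Y 0 ω = 0 ∨ Y 0 ω = t / 2 - μ₃) ∧ (Y 1 ω = 0 ∨ Y 1 ω = t / 2 - μ₃)) :
    ℙ {ω | t / 2 ≤ Y 0 ω + Y 1 ω + Y 2 ω} ≤ ENNReal.ofReal (5 / 9) := by
  set a : ℝ := t / 2 - μ₃ with ha_def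
  have hμ3 : 0 ≤ μ₃ := hE2 ▸ integral_nonneg (hnonneg 2)
  have ha : 0 < a := by
    have : μ₃ ≤ t / 6 := le_trans (le_trans hord.1 hord.2) hbd
    simp only [ha_def]; linarith
  set A : Set Ω := Y 0 ⁻¹' {a} with hA_def
  set B : Set Ω := Y 1 ⁻¹' {a} with hB_def
  have hAm : MeasurableSet A := (hmeas 0) (measurableSet_singleton a)
  have hBm : MeasurableSet B := (hmeas 1) (measurableSet_singleton a)
  -- event equals A ∪ B
  have hev : {ω | t / 2 ≤ Y 0 ω + Y 1 ω + Y 2 ω} = A ∪ B := by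
    ext ω
    simp only [Set.mem_setOf_eq, Set.mem_union, hA_def, hB_def, Set.mem_preimage,
      Set.mem_singleton_iff, hconst ω]
    constructor
    · intro h
      rcases (hval ω).1 with h0 | h0 <;> rcases (hval ω).2 with h1 | h1
      · exfalso; rw [h0, h1] at h; simp only [ha_def] at *; linarith
      · right; exact h1
      · left; exact h0
      · left; exact h0
    · rintro (h | h)
      · have := hnonneg 1 ω; rw [h]; simp only [ha_def] at *; linarith
      · have := hnonneg 0 ω; rw [h]; simp only [ha_def] at *; linarith
  -- expectations: for i = 0, 1, Y i is a times the indicator of the preimage of {a}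
  have hexp : ∀ i : Fin 3, (∀ ω, Y i ω = 0 ∨ Y i ω = a) →
      (∫ ω, Y i ω) = (ℙ (Y i ⁻¹' {a})).toReal * a := by
    intro i hv
    have heq : ∀ ω, Y i ω = (Y i ⁻¹' {a}).indicator (fun _ => a) ω := by
      intro ω
      by_cases h : ω ∈ Y i ⁻¹' {a}
      · rw [Set.indicator_of_mem h]; exact h
      · rw [Set.indicator_of_notMem h]
        rcases hv ω with h0 | h0
        · exact h0
        · exact absurd h0 (by simpa using h)
    rw [integral_congr_ae (Filter.Eventually.of_forall heq),
      integral_indicator_const _ ((hmeas i) (measurableSet_singleton a))]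
    simp [smul_eq_mul, Measure.real]
  have hexp0 : μ₁ = (ℙ A).toReal * a := by
    rw [← hE0]; exact hexp 0 (fun ω => (hval ω).1)
  have hexp1 : μ₂ = (ℙ B).toReal * a := by
    rw [← hE1]; exact hexp 1 (fun ω => (hval ω).2)
  set p : ℝ := (ℙ A).toReal with hp_def
  set q : ℝ := (ℙ B).toReal with hq_def
  have hp0 : 0 ≤ p := ENNReal.toReal_nonneg
  have hq0 : 0 ≤ q := ENNReal.toReal_nonneg
  have hp1 : p ≤ 1 := by
    simp only [hp_def]
    exact ENNReal.toReal_le_of_le_ofReal zero_le_one (by simp [prob_le_one])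
  have hq1 : q ≤ 1 := by
    simp only [hq_def]
    exact ENNReal.toReal_le_of_le_ofReal zero_le_one (by simp [prob_le_one])
  -- independence
  have hiAB : ℙ (A ∩ B) = ℙ A * ℙ B :=
    (hind.indepFun (i := 0) (j := 1) (by decide)).measure_inter_preimage_eq_mul
      {a} {a} (measurableSet_singleton a) (measurableSet_singleton a)
  -- inclusion-exclusion
  have hunion : (ℙ (A ∪ B)).toReal = p + q - p * q := by
    have h1 : ℙ (A ∪ B) + ℙ (A ∩ B) = ℙ A + ℙ B := measure_union_add_inter A hBm
    have h2 : (ℙ (A ∪ B)).toReal + (ℙ (A ∩ B)).toReal = p + q := by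
      rw [← ENNReal.toReal_add (measure_ne_top _ _) (measure_ne_top _ _), h1,
        ENNReal.toReal_add (measure_ne_top _ _) (measure_ne_top _ _)]
    have h3 : (ℙ (A ∩ B)).toReal = p * q := by
      rw [hiAB, ENNReal.toReal_mul]
    linarith
  -- final arithmetic
  rw [hev, ENNReal.le_ofReal_iff_toReal_le (measure_ne_top _ _) (by norm_num), hunion]
  have h1 : a * p ≤ t / 6 := by rw [mul_comm]; rw [hexp0] at hbd; exact hbd
  have h2 : a * q ≤ a * p := by
    rw [mul_comm a q, mul_comm a p]; rw [hexp0, hexp1] at hord; exact hord.2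
  have h3 : μ₃ ≤ a * q := by rw [mul_comm]; rw [hexp1] at hord; exact hord.1
  have h4 : a * p + a * q + μ₃ ≤ t / 3 := by
    rw [mul_comm a p, mul_comm a q]; rw [hexp0, hexp1] at hsum; exact hsum
  exact samuels_k2_arith t μ₃ p q a ht hμ3 ha_def ha hp0 hq0 hp1 hq1 h1 h2 h3 h4
end
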